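/- arXiv:1602.02063 — 5 statements merged into one kernel-verified Lean document; each statement's English description precedes it below -/
import Mathlib

section
/- Suppose n = T < m and U = U_E. Suppose every redundant player of Team 1 is weaker than each of its first T players: P i l ≥ P j l for all 1 ≤ i ≤ T < j ≤ m and all 1 ≤ l ≤ T. Then V(G(T,P,U_E)) = V(G(T,P',U_E)), where P' is the T×T matrix consisting of the first T rows of P; i.e., Team 1 can abandon players T+1,…,m without losing any utility. -/
/-- Value function of the team competition `G(T,P,U)`, by backward induction.
`gval m n P U r X Y w` is the value of the state where the players in `X` (Team 1)
and `Y` (Team 2) have already played, Team 1 has won `w` rounds so far, and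
`r = T - |X|` rounds remain to be played.  The value of the whole game is
`gval m n P U T ∅ ∅ 0`. -/
noncomputable def gval (m n : ℕ) (P : Fin m → Fin n → ℝ) (U : ℕ → ℝ) :
    ℕ → Finset (Fin m) → Finset (Fin n) → ℕ → ℝ
  | 0, _, _, w => U w
  | r + 1, X, Y, w =>
      sSup {v : ℝ | ∃ p : Fin m → ℝ,
        (∀ i, 0 ≤ p i) ∧ (∀ i ∈ X, p i = 0) ∧ (∑ i, p i) = 1 ∧
        v = sInf {u : ℝ | ∃ j, j ∉ Y ∧
          u = ∑ i, p i *
            (P i j * gval m n P U r (insert i X) (insert j Y) (w + 1) +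
             (1 - P i j) * gval m n P U r (insert i X) (insert j Y) w)}}

/-- The utility function `U_E(t) = t - T/2`. -/
noncomputable def UE (T : ℕ) : ℕ → ℝ := fun t => (t : ℝ) - (T : ℝ) / 2


namespace AbandonAux

variable (T : ℕ) {m' : ℕ}

def SF (X : Finset (Fin m')) : Finset (Fin m') :=
  Finset.univ.filter fun i => (i : ℕ) < T ∧ i ∉ X

variable (Q : Fin m' → Fin T → ℝ)

noncomputable def mu (X : Finset (Fin m')) (j : Fin T) : ℝ :=
  sInf ((fun i => Q i j) '' ↑(SF T X))

noncomputable def Ssum (X : Finset (Fin m')) (Y : Finset (Fin T)) : ℝ :=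
  ∑ i ∈ SF T X, ∑ j ∈ Yᶜ, Q i j

noncomputable def Msum (X : Finset (Fin m')) (Y : Finset (Fin T)) : ℝ :=
  ∑ j ∈ Yᶜ, mu T Q X j

noncomputable def Bfn (r : ℕ) (X : Finset (Fin m')) (Y : Finset (Fin T)) : ℝ :=
  (Ssum T Q X Y - (((SF T X).card : ℝ) - r) * Msum T Q X Y) / r

variable {T}

lemma mem_SF {i : Fin m'} {X : Finset (Fin m')} :
    i ∈ SF T X ↔ (i : ℕ) < T ∧ i ∉ X := by simp [SF]

lemma SF_insert (i : Fin m') (X : Finset (Fin m')) :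
    SF T (insert i X) = (SF T X).erase i := by
  ext x
  simp only [mem_SF, Finset.mem_erase, Finset.mem_insert, not_or]
  tauto

lemma SF_insert_of_not_lt {i : Fin m'} (hi : ¬ (i : ℕ) < T) (X : Finset (Fin m')) :
    SF T (insert i X) = SF T X := by
  rw [SF_insert, Finset.erase_eq_of_notMem]
  simp [mem_SF, hi]

lemma mu_le {i : Fin m'} {X : Finset (Fin m')} (hi : i ∈ SF T X) (j : Fin T) :
    mu T Q X j ≤ Q i j := by
  apply csInf_le (((SF T X).finite_toSet).image _).bddBelow
  exact ⟨i, by simpa using hi, rfl⟩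

lemma le_mu {X : Finset (Fin m')} (hne : (SF T X).Nonempty) {j : Fin T} {c : ℝ}
    (h : ∀ i ∈ SF T X, c ≤ Q i j) : c ≤ mu T Q X j := by
  apply le_csInf
  · obtain ⟨i, hi⟩ := hne
    exact ⟨Q i j, ⟨i, by simpa using hi, rfl⟩⟩
  · rintro b ⟨i, hi, rfl⟩
    exact h i (by simpa using hi)

lemma mu_mono {X X' : Finset (Fin m')} (hsub : SF T X' ⊆ SF T X)
    (hne : (SF T X').Nonempty) (j : Fin T) : mu T Q X j ≤ mu T Q X' j := by
  apply csInf_le_csInf (((SF T X).finite_toSet).image _).bddBelow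
  · obtain ⟨i, hi⟩ := hne
    exact ⟨Q i j, ⟨i, by simpa using hi, rfl⟩⟩
  · exact Set.image_mono (by exact_mod_cast hsub)

lemma mu_insert_of_not_lt {i : Fin m'} (hi : ¬ (i : ℕ) < T) (X : Finset (Fin m')) (j : Fin T) :
    mu T Q (insert i X) j = mu T Q X j := by
  unfold mu
  rw [SF_insert_of_not_lt hi]

lemma mu_nonneg (hQ : ∀ i j, Q i j ∈ Set.Icc (0:ℝ) 1) {X : Finset (Fin m')}
    (hne : (SF T X).Nonempty) (j : Fin T) : 0 ≤ mu T Q X j :=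
  le_mu Q hne fun i _ => (hQ i j).1


lemma sum_affine {α : Type*} (s : Finset α) (a b c : α → ℝ) (A B C : ℝ)
    (hA : ∑ x ∈ s, a x = A) (hB : ∑ x ∈ s, b x = B) (hC : ∑ x ∈ s, c x = C)
    (n : ℝ) (hn : (s.card : ℝ) = n) (c₀ c₁ c₂ c₃ : ℝ) :
    ∑ x ∈ s, (c₀ + c₁ * a x + c₂ * b x + c₃ * c x)
      = n * c₀ + c₁ * A + c₂ * B + c₃ * C := by
  rw [Finset.sum_add_distrib, Finset.sum_add_distrib, Finset.sum_add_distrib,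
      ← Finset.mul_sum, ← Finset.mul_sum, ← Finset.mul_sum, hA, hB, hC,
      Finset.sum_const, nsmul_eq_mul, hn]

/-- The key per-player inequality driving the upper bound. -/
lemma key (hdom : ∀ i : Fin m', T ≤ (i : ℕ) → ∀ i' : Fin m', (i' : ℕ) < T → ∀ j, Q i j ≤ Q i' j)
    (r : ℕ) (X : Finset (Fin m')) (Y : Finset (Fin T))
    (hC : Yᶜ.card = r + 1) (hk : r + 1 ≤ (SF T X).card)
    (i : Fin m') (hiX : i ∉ X) :
    ∑ j ∈ Yᶜ, (Q i j + Bfn T Q r (insert i X) (insert j Y))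
      ≤ (r + 1 : ℝ) * Bfn T Q (r+1) X Y := by
  classical
  set k : ℝ := ((SF T X).card : ℝ) with hkdef
  set S : ℝ := Ssum T Q X Y with hSdef
  set M : ℝ := Msum T Q X Y with hMdef
  have hkR : ((r : ℝ) + 1) ≤ k := by rw [hkdef]; exact_mod_cast hk
  have hSFne : (SF T X).Nonempty := Finset.card_pos.mp (by omega)
  have hRHS : (r + 1 : ℝ) * Bfn T Q (r+1) X Y = S - (k - ((r:ℝ)+1)) * M := by
    rw [Bfn]; push_cast; field_simp
    rfl
  rw [hRHS]
  have hScol : ∑ j ∈ Yᶜ, (∑ i' ∈ SF T X, Q i' j) = S := Finset.sum_comm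
  have hMdef' : ∑ j ∈ Yᶜ, mu T Q X j = M := rfl
  have hrow : ∀ i' ∈ SF T X, M ≤ ∑ j ∈ Yᶜ, Q i' j := by
    intro i' hi'
    exact Finset.sum_le_sum fun j _ => mu_le Q hi' j
  have hSge : k * M ≤ S := by
    have := Finset.card_nsmul_le_sum (SF T X) (fun i' => ∑ j ∈ Yᶜ, Q i' j) M hrow
    rwa [nsmul_eq_mul] at this
  set rowi : ℝ := ∑ j ∈ Yᶜ, Q i j with hrowi
  by_cases hi : (i : ℕ) < T
  · -- i is a strong free player
    have hiSF : i ∈ SF T X := mem_SF.mpr ⟨hi, hiX⟩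
    have hcard1 : 1 ≤ (SF T X).card := by omega
    have hcard' : ((SF T (insert i X)).card : ℝ) = k - 1 := by
      rw [SF_insert, Finset.card_erase_of_mem hiSF, Nat.cast_sub hcard1]
      push_cast; ring
    rcases Nat.eq_zero_or_pos r with hr0 | hrpos
    · subst hr0
      have hL : ∑ j ∈ Yᶜ, (Q i j + Bfn T Q 0 (insert i X) (insert j Y)) = rowi := by
        rw [hrowi]
        refine Finset.sum_congr rfl fun j hj => ?_
        simp [Bfn]
      rw [hL]
      have hsplit : rowi + ∑ i' ∈ (SF T X).erase i, ∑ j ∈ Yᶜ, Q i' j = S := by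
        rw [hrowi, hSdef, Ssum]
        exact Finset.add_sum_erase _ (fun i' => ∑ j ∈ Yᶜ, Q i' j) hiSF
      have hlow : (((SF T X).erase i).card : ℝ) * M
          ≤ ∑ i' ∈ (SF T X).erase i, ∑ j ∈ Yᶜ, Q i' j := by
        have := Finset.card_nsmul_le_sum ((SF T X).erase i)
          (fun i' => ∑ j ∈ Yᶜ, Q i' j) M
          (fun i' hi' => hrow i' (Finset.mem_of_mem_erase hi'))
        rwa [nsmul_eq_mul] at this
      have hcerase : (((SF T X).erase i).card : ℝ) = k - 1 := by
        rw [Finset.card_erase_of_mem hiSF, Nat.cast_sub hcard1]; push_cast; ring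
      rw [hcerase] at hlow
      push_cast
      nlinarith [hlow, hsplit]
    · have hrpos' : (0:ℝ) < r := by exact_mod_cast hrpos
      have hchildne : (SF T (insert i X)).Nonempty := by
        rw [← Finset.card_pos, SF_insert, Finset.card_erase_of_mem hiSF]; omega
      have hcoef : (0:ℝ) ≤ k - 1 - r := by linarith
      have hchild : ∀ j ∈ Yᶜ, Bfn T Q r (insert i X) (insert j Y)
          ≤ ((S - rowi - (∑ i' ∈ SF T X, Q i' j) + Q i j)
              - (k - 1 - r) * (M - mu T Q X j)) / r := by
        intro j hj
        have hS' : Ssum T Q (insert i X) (insert j Y)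
            = S - rowi - (∑ i' ∈ SF T X, Q i' j) + Q i j := by
          rw [Ssum, SF_insert, Finset.compl_insert]
          rw [Finset.sum_congr rfl
            (fun i' _ => Finset.sum_erase_eq_sub (f := fun j' => Q i' j') hj)]
          rw [Finset.sum_sub_distrib,
              Finset.sum_erase_eq_sub (f := fun i' => ∑ j' ∈ Yᶜ, Q i' j') hiSF,
              Finset.sum_erase_eq_sub (f := fun i' => Q i' j) hiSF,
              hrowi, hSdef, Ssum]
          ring
        have hM' : M - mu T Q X j ≤ Msum T Q (insert i X) (insert j Y) := by
          rw [Msum, Finset.compl_insert]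
          calc M - mu T Q X j = ∑ j' ∈ Yᶜ.erase j, mu T Q X j' := by
                rw [Finset.sum_erase_eq_sub (f := fun j' => mu T Q X j') hj, hMdef']
            _ ≤ _ := Finset.sum_le_sum fun j' _ =>
                mu_mono Q (by rw [SF_insert]; exact Finset.erase_subset _ _) hchildne j'
        rw [Bfn, hS', hcard']
        apply div_le_div_of_nonneg_right ?_ hrpos'.le
        nlinarith [mul_le_mul_of_nonneg_left hM' hcoef]
      calc ∑ j ∈ Yᶜ, (Q i j + Bfn T Q r (insert i X) (insert j Y))
          ≤ ∑ j ∈ Yᶜ, (Q i j + ((S - rowi - (∑ i' ∈ SF T X, Q i' j) + Q i j)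
              - (k - 1 - r) * (M - mu T Q X j)) / r) :=
            Finset.sum_le_sum fun j hj => add_le_add le_rfl (hchild j hj)
        _ = S - (k - ((r:ℝ)+1)) * M := by
            have hcast : ((Yᶜ.card : ℕ) : ℝ) = (r : ℝ) + 1 := by rw [hC]; push_cast; ring
            have hform : ∀ j ∈ Yᶜ, Q i j + ((S - rowi - (∑ i' ∈ SF T X, Q i' j) + Q i j)
                - (k - 1 - ↑r) * (M - mu T Q X j)) / ↑r
                = (S - rowi - (k - 1 - ↑r) * M) / ↑r
                  + (1 + 1/↑r) * Q i j
                  + (-(1/↑r)) * (∑ i' ∈ SF T X, Q i' j)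
                  + ((k - 1 - ↑r)/↑r) * mu T Q X j := by
              intro j _
              field_simp
              ring
            rw [Finset.sum_congr rfl hform,
                sum_affine Yᶜ (fun j => Q i j) (fun j => ∑ i' ∈ SF T X, Q i' j)
                  (fun j => mu T Q X j) rowi S M rfl hScol hMdef' ((r:ℝ)+1) hcast]
            field_simp
            ring
  · -- i is a redundant player
    have hTi : T ≤ (i : ℕ) := le_of_not_gt hi
    have hQle : ∀ j : Fin T, Q i j ≤ mu T Q X j := fun j =>
      le_mu Q hSFne fun i' hi' => hdom i hTi i' (mem_SF.mp hi').1 j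
    have hrowiM : rowi ≤ M := by
      rw [hrowi, hMdef, Msum]
      exact Finset.sum_le_sum fun j _ => hQle j
    rcases Nat.eq_zero_or_pos r with hr0 | hrpos
    · subst hr0
      have hL : ∑ j ∈ Yᶜ, (Q i j + Bfn T Q 0 (insert i X) (insert j Y)) = rowi := by
        rw [hrowi]
        refine Finset.sum_congr rfl fun j hj => ?_
        simp [Bfn]
      rw [hL]
      push_cast
      nlinarith [hSge, hrowiM]
    · have hrpos' : (0:ℝ) < r := by exact_mod_cast hrpos
      have hchild : ∀ j ∈ Yᶜ, Bfn T Q r (insert i X) (insert j Y)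
          = ((S - (∑ i' ∈ SF T X, Q i' j)) - (k - r) * (M - mu T Q X j)) / r := by
        intro j hj
        have hS' : Ssum T Q (insert i X) (insert j Y)
            = S - (∑ i' ∈ SF T X, Q i' j) := by
          rw [Ssum, SF_insert_of_not_lt hi, Finset.compl_insert]
          rw [Finset.sum_congr rfl
            (fun i' _ => Finset.sum_erase_eq_sub (f := fun j' => Q i' j') hj)]
          rw [Finset.sum_sub_distrib, hSdef, Ssum]
        have hM' : Msum T Q (insert i X) (insert j Y) = M - mu T Q X j := by
          rw [Msum, Finset.compl_insert]
          rw [Finset.sum_congr rfl (fun j' _ => mu_insert_of_not_lt Q hi X j'),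
              Finset.sum_erase_eq_sub (f := fun j' => mu T Q X j') hj, hMdef']
        have hcard' : ((SF T (insert i X)).card : ℝ) = k := by
          rw [SF_insert_of_not_lt hi]
        rw [Bfn, hS', hM', hcard']
      calc ∑ j ∈ Yᶜ, (Q i j + Bfn T Q r (insert i X) (insert j Y))
          = rowi + ∑ j ∈ Yᶜ, (((S - (∑ i' ∈ SF T X, Q i' j))
              - (k - r) * (M - mu T Q X j)) / r) := by
            rw [Finset.sum_add_distrib, ← hrowi]
            congr 1
            exact Finset.sum_congr rfl fun j hj => hchild j hj
        _ = rowi + S - (k - r) * M := by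
            have hcast : ((Yᶜ.card : ℕ) : ℝ) = (r : ℝ) + 1 := by rw [hC]; push_cast; ring
            have hform : ∀ j ∈ Yᶜ, ((S - (∑ i' ∈ SF T X, Q i' j))
                - (k - ↑r) * (M - mu T Q X j)) / ↑r
                = (S - (k - ↑r) * M) / ↑r
                  + (0 : ℝ) * Q i j
                  + (-(1/↑r)) * (∑ i' ∈ SF T X, Q i' j)
                  + ((k - ↑r)/↑r) * mu T Q X j := by
              intro j _
              field_simp
              ring
            rw [Finset.sum_congr rfl hform,
                sum_affine Yᶜ (fun j => Q i j) (fun j => ∑ i' ∈ SF T X, Q i' j)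
                  (fun j => mu T Q X j) rowi S M rfl hScol hMdef' ((r:ℝ)+1) hcast]
            field_simp
            ring
        _ ≤ S - (k - ((r:ℝ)+1)) * M := by nlinarith [hrowiM]



lemma main (hQ : ∀ i j, Q i j ∈ Set.Icc (0:ℝ) 1)
    (hdom : ∀ i : Fin m', T ≤ (i : ℕ) → ∀ i' : Fin m', (i' : ℕ) < T → ∀ j, Q i j ≤ Q i' j) :
    ∀ r : ℕ, ∀ X : Finset (Fin m'), ∀ Y : Finset (Fin T), ∀ w : ℕ,
      Y.card + r = T → r ≤ (SF T X).card →
      (gval m' T Q (UE T) r X Y w ≤ (w:ℝ) - T/2 + Bfn T Q r X Y) ∧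
      (∀ A : Finset (Fin m'), A ⊆ SF T X → A.card = r →
        (w:ℝ) - T/2 + (∑ i ∈ A, ∑ j ∈ Yᶜ, Q i j) / r ≤ gval m' T Q (UE T) r X Y w) := by
  intro r
  induction r with
  | zero =>
    intro X Y w hY hk
    constructor
    · simp [gval, UE, Bfn]
    · intro A hA hcard
      rw [Finset.card_eq_zero.mp hcard]
      simp [gval, UE]
  | succ r IH =>
    intro X Y w hY hk
    have hCcard : Yᶜ.card = r + 1 := by
      rw [Finset.card_compl, Fintype.card_fin]; omega
    have hCcast : ((Yᶜ.card : ℕ) : ℝ) = (r : ℝ) + 1 := by rw [hCcard]; push_cast; ring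
    have hCne : Yᶜ.Nonempty := Finset.card_pos.mp (by omega)
    have hSFne : (SF T X).Nonempty := Finset.card_pos.mp (by omega)
    -- side conditions for children
    have hchildY : ∀ j : Fin T, j ∉ Y → (insert j Y).card + r = T := by
      intro j hj; rw [Finset.card_insert_of_notMem hj]; omega
    have hchildk : ∀ i : Fin m', r ≤ (SF T (insert i X)).card := by
      intro i
      rw [SF_insert]
      have := Finset.pred_card_le_card_erase (s := SF T X) (a := i)
      omega
    -- the inner term as a function
    set t : Fin m' → Fin T → ℝ := fun i j =>
      Q i j * gval m' T Q (UE T) r (insert i X) (insert j Y) (w + 1) +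
      (1 - Q i j) * gval m' T Q (UE T) r (insert i X) (insert j Y) w with ht
    -- per-pair upper bound
    have htub : ∀ i : Fin m', i ∉ X → ∀ j ∈ Yᶜ,
        t i j ≤ (w:ℝ) - T/2 + (Q i j + Bfn T Q r (insert i X) (insert j Y)) := by
      intro i hiX j hj
      have hjY : j ∉ Y := by simpa using hj
      obtain ⟨h1, -⟩ := IH (insert i X) (insert j Y) (w+1) (hchildY j hjY) (hchildk i)
      obtain ⟨h0, -⟩ := IH (insert i X) (insert j Y) w (hchildY j hjY) (hchildk i)
      have e1 := mul_le_mul_of_nonneg_left h1 (hQ i j).1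
      have e0 := mul_le_mul_of_nonneg_left h0 (by linarith [(hQ i j).2] : (0:ℝ) ≤ 1 - Q i j)
      rw [ht]
      push_cast at e1 ⊢
      nlinarith [e1, e0]
    -- per-row sum bound, combining with `key`
    have hrowub : ∀ i : Fin m', i ∉ X →
        ∑ j ∈ Yᶜ, t i j ≤ ((r:ℝ)+1) * ((w:ℝ) - T/2 + Bfn T Q (r+1) X Y) := by
      intro i hiX
      calc ∑ j ∈ Yᶜ, t i j
          ≤ ∑ j ∈ Yᶜ, ((w:ℝ) - T/2 + (Q i j + Bfn T Q r (insert i X) (insert j Y))) :=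
            Finset.sum_le_sum fun j hj => htub i hiX j hj
        _ = (((Yᶜ.card : ℕ)):ℝ) * ((w:ℝ) - T/2)
            + ∑ j ∈ Yᶜ, (Q i j + Bfn T Q r (insert i X) (insert j Y)) := by
            rw [Finset.sum_add_distrib, Finset.sum_const, nsmul_eq_mul]
        _ ≤ ((r:ℝ)+1) * ((w:ℝ) - T/2) + ((r:ℝ)+1) * Bfn T Q (r+1) X Y := by
            rw [hCcast]
            exact add_le_add le_rfl (key Q hdom r X Y hCcard hk i hiX)
        _ = ((r:ℝ)+1) * ((w:ℝ) - T/2 + Bfn T Q (r+1) X Y) := by ring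
    -- every element of the sSup-set is bounded
    have hub : ∀ v ∈ {v : ℝ | ∃ p : Fin m' → ℝ,
        (∀ i, 0 ≤ p i) ∧ (∀ i ∈ X, p i = 0) ∧ (∑ i, p i) = 1 ∧
        v = sInf {u : ℝ | ∃ j, j ∉ Y ∧ u = ∑ i, p i * t i j}},
        v ≤ (w:ℝ) - T/2 + Bfn T Q (r+1) X Y := by
      rintro v ⟨p, hp0, hpX, hp1, rfl⟩
      have hbdd : BddBelow {u : ℝ | ∃ j, j ∉ Y ∧ u = ∑ i, p i * t i j} := by
        apply Set.Finite.bddBelow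
        apply (Set.finite_range fun j : Fin T => ∑ i, p i * t i j).subset
        rintro u ⟨j, -, rfl⟩
        exact ⟨j, rfl⟩
      have hInf_le : ∀ j ∈ Yᶜ, sInf {u : ℝ | ∃ j, j ∉ Y ∧ u = ∑ i, p i * t i j}
          ≤ ∑ i, p i * t i j := by
        intro j hj
        exact csInf_le hbdd ⟨j, by simpa using hj, rfl⟩
      have h1 : ((Yᶜ.card : ℕ):ℝ) * sInf {u : ℝ | ∃ j, j ∉ Y ∧ u = ∑ i, p i * t i j}
          ≤ ∑ j ∈ Yᶜ, ∑ i, p i * t i j := by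
        have := Finset.card_nsmul_le_sum Yᶜ (fun j => ∑ i, p i * t i j) _ hInf_le
        rwa [nsmul_eq_mul] at this
      have h2 : ∑ j ∈ Yᶜ, ∑ i, p i * t i j
          ≤ ((r:ℝ)+1) * ((w:ℝ) - T/2 + Bfn T Q (r+1) X Y) := by
        rw [Finset.sum_comm]
        calc ∑ i, ∑ j ∈ Yᶜ, p i * t i j = ∑ i, p i * ∑ j ∈ Yᶜ, t i j := by
              refine Finset.sum_congr rfl fun i _ => ?_
              rw [Finset.mul_sum]
          _ ≤ ∑ i : Fin m', p i * (((r:ℝ)+1) * ((w:ℝ) - T/2 + Bfn T Q (r+1) X Y)) := by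
              refine Finset.sum_le_sum fun i _ => ?_
              by_cases hiX : i ∈ X
              · rw [hpX i hiX]; simp
              · exact mul_le_mul_of_nonneg_left (hrowub i hiX) (hp0 i)
          _ = ((r:ℝ)+1) * ((w:ℝ) - T/2 + Bfn T Q (r+1) X Y) := by
              rw [← Finset.sum_mul, hp1, one_mul]
      rw [hCcast] at h1
      nlinarith [h1, h2]
    -- unfold the recursion
    have hunfold : gval m' T Q (UE T) (r+1) X Y w
        = sSup {v : ℝ | ∃ p : Fin m' → ℝ,
            (∀ i, 0 ≤ p i) ∧ (∀ i ∈ X, p i = 0) ∧ (∑ i, p i) = 1 ∧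
            v = sInf {u : ℝ | ∃ j, j ∉ Y ∧ u = ∑ i, p i * t i j}} := rfl
    -- a canonical strategy showing nonemptiness
    obtain ⟨i0, hi0⟩ := hSFne
    have hi0X : i0 ∉ X := (mem_SF.mp hi0).2
    have hmem0 : sInf {u : ℝ | ∃ j, j ∉ Y ∧
          u = ∑ i, (fun i => if i = i0 then (1:ℝ) else 0) i * t i j}
        ∈ {v : ℝ | ∃ p : Fin m' → ℝ,
            (∀ i, 0 ≤ p i) ∧ (∀ i ∈ X, p i = 0) ∧ (∑ i, p i) = 1 ∧
            v = sInf {u : ℝ | ∃ j, j ∉ Y ∧ u = ∑ i, p i * t i j}} := by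
      refine ⟨fun i => if i = i0 then (1:ℝ) else 0, fun i => ?_, fun i hiX => ?_, by simp, rfl⟩
      · dsimp only; split <;> norm_num
      · dsimp only; rw [if_neg]; rintro rfl; exact hi0X hiX
    constructor
    · rw [hunfold]
      exact csSup_le ⟨_, hmem0⟩ hub
    · intro A hA hcardA
      have hAX : ∀ i ∈ A, i ∉ X := fun i hi => (mem_SF.mp (hA hi)).2
      set p : Fin m' → ℝ := fun i => if i ∈ A then ((r:ℝ)+1)⁻¹ else 0 with hpdef
      have hrpos : (0:ℝ) < (r:ℝ) + 1 := by positivity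
      have hp0 : ∀ i, 0 ≤ p i := by
        intro i; rw [hpdef]; dsimp only; split
        · positivity
        · exact le_rfl
      have hpX : ∀ i ∈ X, p i = 0 := by
        intro i hiX; rw [hpdef]; dsimp only; rw [if_neg]
        intro hiA; exact hAX i hiA hiX
      have hp1 : ∑ i, p i = 1 := by
        rw [hpdef]
        rw [Finset.sum_ite_mem, Finset.univ_inter, Finset.sum_const, hcardA, nsmul_eq_mul]
        push_cast
        field_simp
      have hmem : sInf {u : ℝ | ∃ j, j ∉ Y ∧ u = ∑ i, p i * t i j}
          ∈ {v : ℝ | ∃ p : Fin m' → ℝ,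
              (∀ i, 0 ≤ p i) ∧ (∀ i ∈ X, p i = 0) ∧ (∑ i, p i) = 1 ∧
              v = sInf {u : ℝ | ∃ j, j ∉ Y ∧ u = ∑ i, p i * t i j}} :=
        ⟨p, hp0, hpX, hp1, rfl⟩
      -- lower bound for each column against the uniform strategy on A
      have hcol : ∀ j : Fin T, j ∉ Y →
          (w:ℝ) - T/2 + (∑ i ∈ A, ∑ j' ∈ Yᶜ, Q i j') / ((r:ℝ)+1)
            ≤ ∑ i, p i * t i j := by
        intro j hjY
        have hjC : j ∈ Yᶜ := Finset.mem_compl.mpr hjY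
        have hsum : ∑ i, p i * t i j = ∑ i ∈ A, ((r:ℝ)+1)⁻¹ * t i j := by
          rw [hpdef]
          simp only [ite_mul, zero_mul]
          rw [Finset.sum_ite_mem, Finset.univ_inter]
        set SA : ℝ := ∑ i ∈ A, ∑ j' ∈ Yᶜ, Q i j' with hSA
        -- per-member lower bound on t i j
        have htlb : ∀ i ∈ A, (w:ℝ) - T/2 + Q i j
              + (∑ i' ∈ A.erase i, ∑ j' ∈ Yᶜ.erase j, Q i' j') / r ≤ t i j := by
          intro i hiA
          have hsubA : A.erase i ⊆ SF T (insert i X) := by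
            intro i' hi'
            rw [SF_insert]
            exact Finset.mem_erase.mpr ⟨(Finset.mem_erase.mp hi').1,
              hA (Finset.mem_erase.mp hi').2⟩
          have hcardAe : (A.erase i).card = r := by
            rw [Finset.card_erase_of_mem hiA, hcardA]
            omega
          obtain ⟨-, hl1⟩ := IH (insert i X) (insert j Y) (w+1) (hchildY j hjY) (hchildk i)
          obtain ⟨-, hl0⟩ := IH (insert i X) (insert j Y) w (hchildY j hjY) (hchildk i)
          have e1 := mul_le_mul_of_nonneg_left (hl1 (A.erase i) hsubA hcardAe) (hQ i j).1
          have e0 := mul_le_mul_of_nonneg_left (hl0 (A.erase i) hsubA hcardAe)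
            (by linarith [(hQ i j).2] : (0:ℝ) ≤ 1 - Q i j)
          rw [Finset.compl_insert] at e1 e0
          rw [ht]
          push_cast at e1 e0 ⊢
          nlinarith [e1, e0]
        -- the aggregate inequality
        have hagg : SA ≤ ∑ i ∈ A, (Q i j
            + (∑ i' ∈ A.erase i, ∑ j' ∈ Yᶜ.erase j, Q i' j') / r) := by
          rcases Nat.eq_zero_or_pos r with hr0 | hrpos'
          · subst hr0
            have hYsing : Yᶜ = {j} := by
              obtain ⟨a, ha⟩ := Finset.card_eq_one.mp hCcard
              rw [ha] at hjC ⊢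
              rw [Finset.mem_singleton.mp hjC]
            have : SA = ∑ i ∈ A, Q i j := by
              rw [hSA, hYsing]
              exact Finset.sum_congr rfl fun i _ => Finset.sum_singleton _ _
            rw [this]
            refine Finset.sum_le_sum fun i hiA => ?_
            simp
          · have hrR : (0:ℝ) < (r:ℝ) := by exact_mod_cast hrpos'
            have hinner : ∀ i ∈ A, ∑ i' ∈ A.erase i, ∑ j' ∈ Yᶜ.erase j, Q i' j'
                = (SA - ∑ j' ∈ Yᶜ, Q i j') - ((∑ i' ∈ A, Q i' j) - Q i j) := by
              intro i hiA
              rw [Finset.sum_congr rfl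
                (fun i' _ => Finset.sum_erase_eq_sub (f := fun j' => Q i' j') hjC)]
              rw [Finset.sum_sub_distrib,
                  Finset.sum_erase_eq_sub (f := fun i' => ∑ j' ∈ Yᶜ, Q i' j') hiA,
                  Finset.sum_erase_eq_sub (f := fun i' => Q i' j) hiA, hSA]
            have hform : ∀ i ∈ A, Q i j
                + (∑ i' ∈ A.erase i, ∑ j' ∈ Yᶜ.erase j, Q i' j') / r
                = (SA - (∑ i' ∈ A, Q i' j) ) / r + (1 + 1/(r:ℝ)) * Q i j
                  + (-(1/(r:ℝ))) * (∑ j' ∈ Yᶜ, Q i j') + (0:ℝ) * Q i j := by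
              intro i hiA
              rw [hinner i hiA]
              field_simp
              ring
            rw [Finset.sum_congr rfl hform,
                sum_affine A (fun i => Q i j) (fun i => ∑ j' ∈ Yᶜ, Q i j')
                  (fun i => Q i j) (∑ i' ∈ A, Q i' j) SA (∑ i' ∈ A, Q i' j)
                  rfl hSA.symm rfl ((r:ℝ)+1) (by rw [hcardA]; push_cast; ring)]
            apply le_of_eq
            field_simp
            ring
        -- combine
        rw [hsum]
        have : ∑ i ∈ A, ((r:ℝ)+1)⁻¹ * t i j
            ≥ ∑ i ∈ A, ((r:ℝ)+1)⁻¹ * ((w:ℝ) - T/2 + Q i j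
                + (∑ i' ∈ A.erase i, ∑ j' ∈ Yᶜ.erase j, Q i' j') / r) :=
          Finset.sum_le_sum fun i hiA =>
            mul_le_mul_of_nonneg_left (htlb i hiA) (by positivity)
        have hexp : ∑ i ∈ A, ((r:ℝ)+1)⁻¹ * ((w:ℝ) - T/2 + Q i j
                + (∑ i' ∈ A.erase i, ∑ j' ∈ Yᶜ.erase j, Q i' j') / r)
            = ((r:ℝ)+1)⁻¹ * (((r:ℝ)+1) * ((w:ℝ) - T/2)
              + ∑ i ∈ A, (Q i j + (∑ i' ∈ A.erase i, ∑ j' ∈ Yᶜ.erase j, Q i' j') / r)) := by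
          rw [← Finset.mul_sum]
          congr 1
          simp only [Finset.sum_add_distrib, Finset.sum_const, hcardA, nsmul_eq_mul]
          push_cast
          ring
        rw [hexp] at this
        have hfin : (w:ℝ) - T/2 + SA / ((r:ℝ)+1)
            ≤ ((r:ℝ)+1)⁻¹ * (((r:ℝ)+1) * ((w:ℝ) - T/2)
              + ∑ i ∈ A, (Q i j + (∑ i' ∈ A.erase i, ∑ j' ∈ Yᶜ.erase j, Q i' j') / r)) := by
          rw [ge_iff_le] at this
          have h3 : ((r:ℝ)+1)⁻¹ * (((r:ℝ)+1) * ((w:ℝ) - T/2) + SA)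
              ≤ ((r:ℝ)+1)⁻¹ * (((r:ℝ)+1) * ((w:ℝ) - T/2)
                + ∑ i ∈ A, (Q i j + (∑ i' ∈ A.erase i, ∑ j' ∈ Yᶜ.erase j, Q i' j') / r)) :=
            mul_le_mul_of_nonneg_left (by linarith [hagg]) (by positivity)
          calc (w:ℝ) - T/2 + SA / ((r:ℝ)+1)
              = ((r:ℝ)+1)⁻¹ * (((r:ℝ)+1) * ((w:ℝ) - T/2) + SA) := by
                field_simp
            _ ≤ _ := h3
        exact le_trans hfin this
      -- conclude the lower bound
      rw [hunfold]
      refine le_trans ?_ (le_csSup ⟨(w:ℝ) - T/2 + Bfn T Q (r+1) X Y, hub⟩ hmem)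
      apply le_csInf
      · obtain ⟨j0, hj0⟩ := hCne
        exact ⟨∑ i, p i * t i j0, j0, by simpa using hj0, rfl⟩
      · rintro b ⟨j, hjY, rfl⟩
        have := hcol j hjY
        push_cast
        convert this using 3


end AbandonAux

open AbandonAux in
/-- Suppose `n = T < m` and `U = U_E`.  If every redundant player
`T+1, …, m` of Team 1 is weaker than each of its first `T` players, then Team 1 can
abandon its redundant players without losing any utility: the value of the game
equals that of the game played with only the first `T` rows of `P`. -/
theorem abandon_weak_redundant_UE (T m : ℕ) (hT : 1 ≤ T) (hm : T < m)
    (P : Fin m → Fin T → ℝ) (hP : ∀ i j, P i j ∈ Set.Icc (0 : ℝ) 1)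
    (hweak : ∀ i j : Fin m, (i : ℕ) < T → T ≤ (j : ℕ) → ∀ l : Fin T, P j l ≤ P i l) :
    gval m T P (UE T) T ∅ ∅ 0 =
      gval T T (fun i j => P (Fin.castLE hm.le i) j) (UE T) T ∅ ∅ 0 := by
  classical
  -- the big game
  have hdomBig : ∀ i : Fin m, T ≤ (i : ℕ) → ∀ i' : Fin m, (i' : ℕ) < T → ∀ j, P i j ≤ P i' j :=
    fun i hi i' hi' j => hweak i' i hi' hi j
  have hmap : SF T (∅ : Finset (Fin m))
      = Finset.univ.map ⟨Fin.castLE hm.le, Fin.castLE_injective hm.le⟩ := by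
    ext i
    simp only [mem_SF, Finset.notMem_empty, not_false_iff, and_true, Finset.mem_map,
      Finset.mem_univ, true_and, Function.Embedding.coeFn_mk]
    constructor
    · intro h
      exact ⟨⟨(i : ℕ), h⟩, by ext; simp⟩
    · rintro ⟨a, rfl⟩
      exact a.isLt
  have hcardBig : (SF T (∅ : Finset (Fin m))).card = T := by
    rw [hmap, Finset.card_map, Finset.card_univ, Fintype.card_fin]
  have hYBig : (∅ : Finset (Fin T)).card + T = T := by simp
  obtain ⟨hupB, hlowB⟩ := main (T := T) (m' := m) P hP hdomBig T ∅ ∅ 0 hYBig (le_of_eq hcardBig.symm)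
  have hBfnBig : Bfn T P T ∅ ∅ = Ssum T P ∅ ∅ / T := by
    rw [Bfn, hcardBig]
    simp
  have hvalBig : gval m T P (UE T) T ∅ ∅ 0 = ((0:ℕ):ℝ) - T/2 + Ssum T P ∅ ∅ / T := by
    refine le_antisymm (hBfnBig ▸ hupB) ?_
    have := hlowB (SF T (∅ : Finset (Fin m))) (Finset.Subset.refl _) hcardBig
    rw [Ssum]
    exact this
  -- the small game
  set Q : Fin T → Fin T → ℝ := fun i j => P (Fin.castLE hm.le i) j with hQdef
  have hQIcc : ∀ i j, Q i j ∈ Set.Icc (0:ℝ) 1 := fun i j => hP _ j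
  have hdomSmall : ∀ i : Fin T, T ≤ (i : ℕ) → ∀ i' : Fin T, (i' : ℕ) < T → ∀ j, Q i j ≤ Q i' j :=
    fun i hi => absurd i.isLt (by omega)
  have hSFSmall : SF T (∅ : Finset (Fin T)) = Finset.univ := by
    ext i
    simp [mem_SF, i.isLt]
  have hcardSmall : (SF T (∅ : Finset (Fin T))).card = T := by
    rw [hSFSmall, Finset.card_univ, Fintype.card_fin]
  obtain ⟨hupS, hlowS⟩ := main (T := T) (m' := T) Q hQIcc hdomSmall T ∅ ∅ 0 hYBig
    (le_of_eq hcardSmall.symm)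
  have hBfnSmall : Bfn T Q T ∅ ∅ = Ssum T Q ∅ ∅ / T := by
    rw [Bfn, hcardSmall]
    simp
  have hvalSmall : gval T T Q (UE T) T ∅ ∅ 0 = ((0:ℕ):ℝ) - T/2 + Ssum T Q ∅ ∅ / T := by
    refine le_antisymm (hBfnSmall ▸ hupS) ?_
    have := hlowS (SF T (∅ : Finset (Fin T))) (Finset.Subset.refl _) hcardSmall
    rw [Ssum]
    exact this
  -- the two sums agree
  have hSeq : Ssum T P ∅ ∅ = Ssum T Q ∅ ∅ := by
    rw [Ssum, Ssum, hmap, hSFSmall, Finset.sum_map]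
    rfl
  rw [hvalBig, hvalSmall, hSeq]
end

section
/- Let T = 2, m = 2, n = 3, U = U_E (so U_E(t) = t − 1), and let P be the 2×3 matrix with rows (0,0,1) and (1,1,0). Then V(G(2,P,U_E)) = −1/3, but the uniformly random strategy of Team 1 guarantees only −1/2: min over j ∈ {1,2,3} of (1/2)·Σ_{i=1}^{2} (P i j·V({i},{j},1) + (1−P i j)·V({i},{j},0)) = −1/2 < −1/3. Hence, when the opposing team has redundant players, the uniformly random strategy need not be an equilibrium strategy even for a team with no redundant players. -/
lemma forced (i : Fin 2) (p : Fin 2 → ℝ)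
    (hX : ∀ k ∈ ({i} : Finset (Fin 2)), p k = 0) (hs : (∑ k, p k) = 1)
    (F : Fin 2 → ℝ) : ∑ k, p k * F k = F (i + 1) := by
  have hi : p i = 0 := hX i (Finset.mem_singleton_self i)
  have h2 : p 0 + p 1 = 1 := by simpa [Fin.sum_univ_two] using hs
  fin_cases i <;> simp_all [Fin.sum_univ_two]

lemma sSup_step (i : Fin 2) (Y : Finset (Fin 3)) (G : Fin 2 → Fin 3 → ℝ) :
    sSup {v : ℝ | ∃ p : Fin 2 → ℝ,
        (∀ k, 0 ≤ p k) ∧ (∀ k ∈ ({i} : Finset (Fin 2)), p k = 0) ∧ (∑ k, p k) = 1 ∧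
        v = sInf {u : ℝ | ∃ j, j ∉ Y ∧ u = ∑ k, p k * G k j}}
      = sInf {u : ℝ | ∃ j, j ∉ Y ∧ u = G (i + 1) j} := by
  have hset : {v : ℝ | ∃ p : Fin 2 → ℝ,
        (∀ k, 0 ≤ p k) ∧ (∀ k ∈ ({i} : Finset (Fin 2)), p k = 0) ∧ (∑ k, p k) = 1 ∧
        v = sInf {u : ℝ | ∃ j, j ∉ Y ∧ u = ∑ k, p k * G k j}}
      = {sInf {u : ℝ | ∃ j, j ∉ Y ∧ u = G (i + 1) j}} := by
    ext v
    simp only [Set.mem_setOf_eq, Set.mem_singleton_iff]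
    constructor
    · rintro ⟨p, h0, hX, hs, rfl⟩
      congr 1
      ext u
      simp only [Set.mem_setOf_eq]
      constructor
      · rintro ⟨j, hj, rfl⟩; exact ⟨j, hj, (forced i p hX hs fun k => G k j)⟩
      · rintro ⟨j, hj, rfl⟩; exact ⟨j, hj, (forced i p hX hs fun k => G k j).symm⟩
    · rintro rfl
      refine ⟨fun k => if k = i then 0 else 1, fun k => by positivity, by simp, ?_, ?_⟩
      · fin_cases i <;> simp [Fin.sum_univ_two]
      · congr 1
        ext u
        simp only [Set.mem_setOf_eq]
        have key : ∀ j, ∑ k, (if k = i then (0:ℝ) else 1) * G k j = G (i+1) j := fun j =>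
          forced i _ (by simp) (by fin_cases i <;> simp [Fin.sum_univ_two]) (fun k => G k j)
        constructor
        · rintro ⟨j, hj, rfl⟩; exact ⟨j, hj, (key j).symm⟩
        · rintro ⟨j, hj, rfl⟩; exact ⟨j, hj, (key j)⟩
  rw [hset, csSup_singleton]

lemma sInf_compl (G : Fin 3 → ℝ) (j a b : Fin 3) (h : ∀ j', j' ≠ j ↔ (j' = a ∨ j' = b)) :
    sInf {u : ℝ | ∃ j', j' ∉ ({j} : Finset (Fin 3)) ∧ u = G j'} = G a ⊓ G b := by
  have : {u : ℝ | ∃ j', j' ∉ ({j} : Finset (Fin 3)) ∧ u = G j'} = {G a, G b} := by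
    ext u
    simp only [Set.mem_setOf_eq, Finset.mem_singleton, Set.mem_insert_iff,
      Set.mem_singleton_iff]
    constructor
    · rintro ⟨j', hj', rfl⟩
      rcases (h j').1 hj' with rfl | rfl
      · exact Or.inl rfl
      · exact Or.inr rfl
    · rintro (rfl | rfl)
      · exact ⟨a, (h a).2 (Or.inl rfl), rfl⟩
      · exact ⟨b, (h b).2 (Or.inr rfl), rfl⟩
  rw [this, csInf_pair]

lemma gval1 (i : Fin 2) (j : Fin 3) (w : ℕ) :
    gval 2 3 ![![(0 : ℝ), 0, 1], ![1, 1, 0]] (UE 2) 1 {i} {j} w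
      = UE 2 w + (if i = 0 ∧ j = 2 then 1 else 0) := by
  simp only [gval]
  rw [sSup_step i {j} (fun k j' => ![![(0 : ℝ), 0, 1], ![1, 1, 0]] k j' * UE 2 (w+1)
      + (1 - ![![(0 : ℝ), 0, 1], ![1, 1, 0]] k j') * UE 2 w)]
  fin_cases i <;> fin_cases j <;>
    simp only [show ((⟨0, by norm_num⟩ : Fin 2) + 1) = 1 by decide,
      show ((⟨1, by norm_num⟩ : Fin 2) + 1) = 0 by decide]
  · rw [sInf_compl _ _ 1 2 (by decide)]
    norm_num [UE, Matrix.cons_val_two, Matrix.tail_cons]; decide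
  · rw [sInf_compl _ _ 0 2 (by decide)]
    norm_num [UE, Matrix.cons_val_two, Matrix.tail_cons]; decide
  · rw [sInf_compl _ _ 0 1 (by decide)]
    norm_num [UE, Matrix.cons_val_two, Matrix.tail_cons]
    simp [show ((⟨2, by norm_num⟩ : Fin 3) = 2) from rfl]
  · rw [sInf_compl _ _ 1 2 (by decide)]
    norm_num [UE, Matrix.cons_val_two, Matrix.tail_cons]
  · rw [sInf_compl _ _ 0 2 (by decide)]
    norm_num [UE, Matrix.cons_val_two, Matrix.tail_cons]
  · rw [sInf_compl _ _ 0 1 (by decide)]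
    norm_num [UE, Matrix.cons_val_two, Matrix.tail_cons]

lemma gval_succ (m n : ℕ) (P : Fin m → Fin n → ℝ) (U : ℕ → ℝ) (r : ℕ)
    (X : Finset (Fin m)) (Y : Finset (Fin n)) (w : ℕ) :
    gval m n P U (r + 1) X Y w =
      sSup {v : ℝ | ∃ p : Fin m → ℝ,
        (∀ i, 0 ≤ p i) ∧ (∀ i ∈ X, p i = 0) ∧ (∑ i, p i) = 1 ∧
        v = sInf {u : ℝ | ∃ j, j ∉ Y ∧
          u = ∑ i, p i *
            (P i j * gval m n P U r (insert i X) (insert j Y) (w + 1) +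
             (1 - P i j) * gval m n P U r (insert i X) (insert j Y) w)}} := by
  rw [gval]

lemma sInf_all (f : Fin 3 → ℝ) :
    sInf {u : ℝ | ∃ j : Fin 3, u = f j} = f 0 ⊓ (f 1 ⊓ f 2) := by
  have h : {u : ℝ | ∃ j : Fin 3, u = f j} = {f 0, f 1, f 2} := by
    ext u
    simp only [Set.mem_setOf_eq, Set.mem_insert_iff, Set.mem_singleton_iff]
    constructor
    · rintro ⟨j, rfl⟩
      fin_cases j
      · exact Or.inl rfl
      · exact Or.inr (Or.inl rfl)
      · exact Or.inr (Or.inr rfl)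
    · rintro (rfl | rfl | rfl)
      exacts [⟨0, rfl⟩, ⟨1, rfl⟩, ⟨2, rfl⟩]
  rw [h, csInf_insert (((Set.finite_singleton _).insert _).bddBelow)
    (Set.insert_nonempty _ _), csInf_pair]

lemma min3_le (a b c x : ℝ) (h : a + a + c ≤ 3 * x) : a ⊓ (b ⊓ c) ≤ x := by
  have h1 : a ⊓ (b ⊓ c) ≤ a := inf_le_left
  have h2 : a ⊓ (b ⊓ c) ≤ c := le_trans inf_le_right inf_le_right
  linarith

example : (0:Fin 3) = 2 ↔ False := by simp
example : insert (0 : Fin 2) (∅ : Finset (Fin 2)) = {0} := by simp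

/-- For `T = m = 2`, `n = 3`, `U = U_E` and
`P = [[0,0,1],[1,1,0]]`: the value of the game is `-1/3`, but the uniformly random
strategy of Team 1 only guarantees `-1/2 < -1/3`.  Hence the uniformly random
strategy need not be an equilibrium strategy for a team with no redundant players
when the opposing team has redundant players. -/
theorem uniform_not_SPE_with_redundant_opponent :
    gval 2 3 ![![(0 : ℝ), 0, 1], ![1, 1, 0]] (UE 2) 2 ∅ ∅ 0 = -1/3 ∧
    sInf {u : ℝ | ∃ j : Fin 3, u = (1 / 2 : ℝ) * ∑ i : Fin 2,
        (![![(0 : ℝ), 0, 1], ![1, 1, 0]] i j *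
            gval 2 3 ![![(0 : ℝ), 0, 1], ![1, 1, 0]] (UE 2) 1 {i} {j} 1 +
          (1 - ![![(0 : ℝ), 0, 1], ![1, 1, 0]] i j) *
            gval 2 3 ![![(0 : ℝ), 0, 1], ![1, 1, 0]] (UE 2) 1 {i} {j} 0)} = -1/2 ∧
    (-1/2 : ℝ) < -1/3 := by
  refine ⟨?_, ?_, by norm_num⟩
  · refine Eq.trans (gval_succ 2 3 _ _ 1 ∅ ∅ 0) ?_
    simp only [show ∀ i : Fin 2, insert i (∅ : Finset (Fin 2)) = {i} from fun i => by simp,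
      show ∀ j : Fin 3, insert j (∅ : Finset (Fin 3)) = {j} from fun j => by simp, gval1]
    apply IsGreatest.csSup_eq
    constructor
    · refine ⟨fun k => if k = 0 then (1/3 : ℝ) else 2/3, fun k => by dsimp; split <;> norm_num,
        by simp, by norm_num [Fin.sum_univ_two], ?_⟩
      simp only [Finset.notMem_empty, not_false_eq_true, true_and]
      rw [sInf_all]
      norm_num [Fin.sum_univ_two, UE, Matrix.cons_val_zero, Matrix.cons_val_one,
        Matrix.head_cons, Matrix.cons_val_two, Matrix.tail_cons,
        show ((0:Fin 3) = 2) ↔ False from by simp, show ((1:Fin 3) = 2) ↔ False from by simp,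
        show ((2:Fin 3) = 2) ↔ True from by simp]
    · rintro v ⟨p, h0, -, hs, rfl⟩
      have h2 : p 0 + p 1 = 1 := by simpa [Fin.sum_univ_two] using hs
      simp only [Finset.notMem_empty, not_false_eq_true, true_and]
      rw [sInf_all]
      apply min3_le
      have e0 := h0 0
      have e1 := h0 1
      norm_num [Fin.sum_univ_two, UE, Matrix.cons_val_zero, Matrix.cons_val_one,
        Matrix.head_cons, Matrix.cons_val_two, Matrix.tail_cons,
        show ((0:Fin 3) = 2) ↔ False from by simp, show ((1:Fin 3) = 2) ↔ False from by simp,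
        show ((2:Fin 3) = 2) ↔ True from by simp]
      linarith
  · rw [sInf_all]
    norm_num [gval1, Fin.sum_univ_two, UE, Matrix.cons_val_zero, Matrix.cons_val_one,
      Matrix.head_cons, Matrix.cons_val_two, Matrix.tail_cons,
      show ((0:Fin 3) = 2) ↔ False from by simp, show ((1:Fin 3) = 2) ↔ False from by simp,
      show ((2:Fin 3) = 2) ↔ True from by simp]
end

section
/- Let T ≥ 2, m = 2T−2, n = 2T−1, U = U_E (so U_E(t) = t − T/2), and let P be the m×n matrix with P i j = 1 if i = j ≤ T and P i j = 0 otherwise (Team 1 has T ordinary players, player i beating only opponent i, plus T−2 dominated players with all-zero rows; Team 2 has T−1 extra players who beat every opponent). Then V(G(T,P,U_E)) = −T/2; i.e., Team 2 can win every one of the T rounds with certainty when Team 1 has only T−2 dominated players. -/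
lemma UE_succ (T w : ℕ) : UE T (w + 1) = UE T w + 1 := by
  simp only [UE]; push_cast; ring

lemma exists_good_col (T : ℕ) (hT : 2 ≤ T)
    (X : Finset (Fin (2*T-2))) (Y : Finset (Fin (2*T-1)))
    (hcard : X.card = Y.card)
    (p : Fin (2*T-2) → ℝ) (hpX : ∀ i ∈ X, p i = 0) :
    ∃ j : Fin (2*T-1), j ∉ Y ∧ ∀ i : Fin (2*T-2),
      p i * (if (i:ℕ) = (j:ℕ) ∧ (i:ℕ) < T then (1:ℝ) else 0) = 0 := by
  have hmn : 2*T-2 < 2*T-1 := by omega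
  set f : Fin (2*T-2) → Fin (2*T-1) := fun i => ⟨i, lt_trans i.2 hmn⟩ with hf
  have hfinj : Function.Injective f := by
    intro a b h
    exact Fin.ext (by simpa [f, Fin.ext_iff] using h)
  set S : Finset (Fin (2*T-2)) := Finset.univ.filter (fun i => p i ≠ 0) with hS
  have hdisj : Disjoint X S := by
    rw [Finset.disjoint_left]
    intro a haX haS
    exact (Finset.mem_filter.mp haS).2 (hpX a haX)
  have hcard2 : (Y ∪ S.image f).card < 2*T-1 := by
    calc (Y ∪ S.image f).card ≤ Y.card + (S.image f).card := Finset.card_union_le _ _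
      _ ≤ Y.card + S.card := by gcongr; exact Finset.card_image_le
      _ = X.card + S.card := by rw [hcard]
      _ = (X ∪ S).card := (Finset.card_union_of_disjoint hdisj).symm
      _ ≤ Fintype.card (Fin (2*T-2)) := Finset.card_le_univ _
      _ = 2*T-2 := Fintype.card_fin _
      _ < 2*T-1 := hmn
  obtain ⟨j, hj⟩ : ∃ j, j ∉ Y ∪ S.image f := by
    by_contra h
    push_neg at h
    have hsub : Finset.univ ⊆ Y ∪ S.image f := fun j _ => h j
    have := Finset.card_le_card hsub
    simp only [Finset.card_univ, Fintype.card_fin] at this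
    omega
  rw [Finset.mem_union] at hj
  push_neg at hj
  refine ⟨j, hj.1, fun i => ?_⟩
  by_cases hpi : p i = 0
  · simp [hpi]
  · suffices h : ¬((i:ℕ) = (j:ℕ) ∧ (i:ℕ) < T) by simp [h]
    rintro ⟨hij, -⟩
    apply hj.2
    exact Finset.mem_image.mpr ⟨i, by simp [hS, hpi], Fin.ext hij⟩

lemma key (T : ℕ) (hT : 2 ≤ T) :
    ∀ (r : ℕ) (X : Finset (Fin (2*T-2))) (Y : Finset (Fin (2*T-1))) (w : ℕ),
      X.card = Y.card → X.card + r ≤ T →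
      gval (2*T-2) (2*T-1)
        (fun i j => if (i:ℕ) = (j:ℕ) ∧ (i:ℕ) < T then (1:ℝ) else 0)
        (UE T) r X Y w = UE T w := by
  intro r
  induction r with
  | zero => intro X Y w _ _; rfl
  | succ r ih =>
    intro X Y w hcard hle
    rw [gval]
    set Pm : Fin (2*T-2) → Fin (2*T-1) → ℝ :=
      fun i j => if (i:ℕ) = (j:ℕ) ∧ (i:ℕ) < T then (1:ℝ) else 0 with hPm
    have hPm01 : ∀ i j, 0 ≤ Pm i j := by
      intro i j; simp only [Pm]; split <;> norm_num
    have hinner : ∀ p : Fin (2*T-2) → ℝ,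
        (∀ i, 0 ≤ p i) → (∀ i ∈ X, p i = 0) → (∑ i, p i) = 1 →
        sInf {u : ℝ | ∃ j, j ∉ Y ∧
          u = ∑ i, p i *
            (Pm i j * gval (2*T-2) (2*T-1) Pm (UE T) r (insert i X) (insert j Y) (w + 1) +
             (1 - Pm i j) * gval (2*T-2) (2*T-1) Pm (UE T) r (insert i X) (insert j Y) w)}
          = UE T w := by
      intro p hp0 hpX hpsum
      have hval : ∀ j, j ∉ Y →
          (∑ i, p i *
            (Pm i j * gval (2*T-2) (2*T-1) Pm (UE T) r (insert i X) (insert j Y) (w + 1) +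
             (1 - Pm i j) * gval (2*T-2) (2*T-1) Pm (UE T) r (insert i X) (insert j Y) w))
          = UE T w + ∑ i, p i * Pm i j := by
        intro j hj
        have hterm : ∀ i : Fin (2*T-2),
            p i *
            (Pm i j * gval (2*T-2) (2*T-1) Pm (UE T) r (insert i X) (insert j Y) (w + 1) +
             (1 - Pm i j) * gval (2*T-2) (2*T-1) Pm (UE T) r (insert i X) (insert j Y) w)
            = p i * UE T w + p i * Pm i j := by
          intro i
          by_cases hiX : i ∈ X
          · rw [hpX i hiX]; ring
          · have h1 : (insert i X).card = (insert j Y).card := by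
              rw [Finset.card_insert_of_notMem hiX, Finset.card_insert_of_notMem hj, hcard]
            have h2 : (insert i X).card + r ≤ T := by
              rw [Finset.card_insert_of_notMem hiX]; omega
            rw [ih _ _ (w+1) h1 h2, ih _ _ w h1 h2, UE_succ]; ring
        rw [Finset.sum_congr rfl (fun i _ => hterm i), Finset.sum_add_distrib,
          ← Finset.sum_mul, hpsum]
        ring
      obtain ⟨j₀, hj₀Y, hj₀⟩ := exists_good_col T hT X Y hcard p hpX
      have hQ0 : (∑ i, p i * Pm i j₀) = 0 := Finset.sum_eq_zero (fun i _ => hj₀ i)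
      apply le_antisymm
      · apply csInf_le
        · refine ⟨UE T w, ?_⟩
          rintro u ⟨j, hjY, rfl⟩
          rw [hval j hjY]
          have : 0 ≤ ∑ i, p i * Pm i j :=
            Finset.sum_nonneg (fun i _ => mul_nonneg (hp0 i) (hPm01 i j))
          linarith
        · exact ⟨j₀, hj₀Y, by rw [hval j₀ hj₀Y, hQ0, add_zero]⟩
      · refine le_csInf ⟨_, j₀, hj₀Y, rfl⟩ ?_
        rintro u ⟨j, hjY, rfl⟩
        rw [hval j hjY]
        have : 0 ≤ ∑ i, p i * Pm i j :=
          Finset.sum_nonneg (fun i _ => mul_nonneg (hp0 i) (hPm01 i j))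
        linarith
    have hXcard : X.card < 2*T-2 := by omega
    set c : ℝ := ((2*T-2 - X.card : ℕ) : ℝ)⁻¹ with hc
    have hcne : ((2*T-2 - X.card : ℕ) : ℝ) ≠ 0 := by
      exact_mod_cast (Nat.sub_pos_of_lt hXcard).ne'
    have hcpos : 0 < c := by
      rw [hc]
      apply inv_pos.mpr
      exact_mod_cast Nat.sub_pos_of_lt hXcard
    set p₀ : Fin (2*T-2) → ℝ := fun i => if i ∈ X then 0 else c with hp₀
    have hp₀0 : ∀ i, 0 ≤ p₀ i := by
      intro i; simp only [p₀]; split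
      · exact le_refl _
      · exact hcpos.le
    have hp₀X : ∀ i ∈ X, p₀ i = 0 := fun i hi => by simp [p₀, hi]
    have hp₀sum : (∑ i, p₀ i) = 1 := by
      have h1 : ∀ i ∈ Xᶜ, p₀ i = c := fun i hi => by
        simp [p₀, Finset.mem_compl.mp hi]
      rw [← Finset.sum_compl_add_sum X p₀, Finset.sum_congr rfl h1,
        Finset.sum_congr rfl hp₀X, Finset.sum_const_zero, add_zero,
        Finset.sum_const, Finset.card_compl, Fintype.card_fin, nsmul_eq_mul, hc]
      exact mul_inv_cancel₀ hcne
    have hset : {v : ℝ | ∃ p : Fin (2*T-2) → ℝ,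
        (∀ i, 0 ≤ p i) ∧ (∀ i ∈ X, p i = 0) ∧ (∑ i, p i) = 1 ∧
        v = sInf {u : ℝ | ∃ j, j ∉ Y ∧
          u = ∑ i, p i *
            (Pm i j * gval (2*T-2) (2*T-1) Pm (UE T) r (insert i X) (insert j Y) (w + 1) +
             (1 - Pm i j) * gval (2*T-2) (2*T-1) Pm (UE T) r (insert i X) (insert j Y) w)}}
        = {UE T w} := by
      ext v
      simp only [Set.mem_setOf_eq, Set.mem_singleton_iff]
      constructor
      · rintro ⟨p, hp0, hpX, hpsum, rfl⟩
        exact hinner p hp0 hpX hpsum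
      · rintro rfl
        exact ⟨p₀, hp₀0, hp₀X, hp₀sum, (hinner p₀ hp₀0 hp₀X hp₀sum).symm⟩
    rw [hset, csSup_singleton]

/-- Let `T ≥ 2`, `m = 2T-2`, `n = 2T-1`, `U = U_E`, and let
`P i j = 1` iff `i = j ≤ T` (Team 1 has `T` ordinary players plus `T-2` dominated
ones; Team 2 has `T-1` extra invincible players).  Then the value is `-T/2`:
Team 2 can win every round with certainty. -/
theorem few_dominated_players_lose_all (T : ℕ) (hT : 2 ≤ T) :
    gval (2 * T - 2) (2 * T - 1)
      (fun i j => if (i : ℕ) = (j : ℕ) ∧ (i : ℕ) < T then (1 : ℝ) else 0)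
      (UE T) T ∅ ∅ 0 = -(T : ℝ) / 2 := by
  rw [key T hT T ∅ ∅ 0 rfl (by simp)]
  simp [UE, neg_div]
end

section
/- Let T ≥ 1, m = 2T−1, n = 2T−1, U = U_E (so U_E(t) = t − T/2), and let P be the m×n matrix with P i j = 1 if i = j ≤ T and P i j = 0 otherwise (Team 1 has T ordinary players, player i beating only opponent i, plus T−1 dominated players with all-zero rows; Team 2 has T−1 extra players who beat every opponent). Then V(G(T,P,U_E)) > −T/2; i.e., with T−1 dominated players recruited, Team 1 wins a strictly positive expected number of rounds. -/
namespace EDPH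

noncomputable abbrev PP (T : ℕ) : Fin (2*T-1) → Fin (2*T-1) → ℝ :=
  fun i j => if (i : ℕ) = (j : ℕ) ∧ (i : ℕ) < T then (1 : ℝ) else 0

noncomputable abbrev gv (T : ℕ) := gval (2*T-1) (2*T-1) (PP T) (UE T)

lemma UE_succ (T w : ℕ) : UE T (w+1) = UE T w + 1 := by
  simp only [UE]; push_cast; ring

lemma UE_mono {T a b : ℕ} (h : a ≤ b) : UE T a ≤ UE T b := by
  simp only [UE]; have : (a:ℝ) ≤ b := by exact_mod_cast h
  linarith

lemma PP_nonneg (T : ℕ) (i j : Fin (2*T-1)) : 0 ≤ PP T i j := by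
  simp only [PP]; split <;> norm_num

lemma PP_le_one (T : ℕ) (i j : Fin (2*T-1)) : PP T i j ≤ 1 := by
  simp only [PP]; split <;> norm_num

lemma gv_zero (T : ℕ) (X Y : Finset (Fin (2*T-1))) (w : ℕ) : gv T 0 X Y w = UE T w := rfl

/-- bounds on the one-round sum, given bounds at level `r`. -/
lemma sum_bounds {T : ℕ} (r : ℕ)
    (IH : ∀ (X Y : Finset (Fin (2*T-1))) (w : ℕ), X.card + r ≤ 2*T-1 → Y.card + r ≤ 2*T-1 →
      UE T w ≤ gv T r X Y w ∧ gv T r X Y w ≤ UE T (w + r))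
    (X Y : Finset (Fin (2*T-1))) (w : ℕ)
    (hX : X.card + (r+1) ≤ 2*T-1) (hY : Y.card + (r+1) ≤ 2*T-1)
    (p : Fin (2*T-1) → ℝ) (hp0 : ∀ i, 0 ≤ p i) (hps : (∑ i, p i) = 1)
    (j : Fin (2*T-1)) :
    UE T w ≤ (∑ i, p i * (PP T i j * gv T r (insert i X) (insert j Y) (w + 1) +
        (1 - PP T i j) * gv T r (insert i X) (insert j Y) w)) ∧
    (∑ i, p i * (PP T i j * gv T r (insert i X) (insert j Y) (w + 1) +
        (1 - PP T i j) * gv T r (insert i X) (insert j Y) w)) ≤ UE T (w + (r+1)) := by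
  have hcX : ∀ i : Fin (2*T-1), (insert i X).card + r ≤ 2*T-1 := by
    intro i; have := Finset.card_insert_le i X; omega
  have hcY : (insert j Y).card + r ≤ 2*T-1 := by
    have := Finset.card_insert_le j Y; omega
  have hci : ∀ i : Fin (2*T-1),
      UE T w ≤ PP T i j * gv T r (insert i X) (insert j Y) (w + 1) +
        (1 - PP T i j) * gv T r (insert i X) (insert j Y) w ∧
      PP T i j * gv T r (insert i X) (insert j Y) (w + 1) +
        (1 - PP T i j) * gv T r (insert i X) (insert j Y) w ≤ UE T (w + (r+1)) := by
    intro i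
    obtain ⟨l1, u1⟩ := IH (insert i X) (insert j Y) (w+1) (hcX i) hcY
    obtain ⟨l0, u0⟩ := IH (insert i X) (insert j Y) w (hcX i) hcY
    have q0 := PP_nonneg T i j
    have q1 := PP_le_one T i j
    have e1 : UE T (w+1) = UE T w + 1 := UE_succ T w
    have e2 : UE T ((w+1)+r) = UE T (w+(r+1)) := by congr 1; omega
    have e3 : UE T (w+r) ≤ UE T (w+(r+1)) := UE_mono (by omega)
    set g1 := gv T r (insert i X) (insert j Y) (w+1)
    set g0 := gv T r (insert i X) (insert j Y) w
    rw [e2] at u1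
    constructor
    · nlinarith [mul_le_mul_of_nonneg_left (by linarith : UE T w ≤ g1) q0,
        mul_le_mul_of_nonneg_left l0 (by linarith : (0:ℝ) ≤ 1 - PP T i j)]
    · nlinarith [mul_le_mul_of_nonneg_left u1 q0,
        mul_le_mul_of_nonneg_left (by linarith : g0 ≤ UE T (w+(r+1)))
          (by linarith : (0:ℝ) ≤ 1 - PP T i j)]
  constructor
  · calc UE T w = ∑ i, p i * UE T w := by rw [← Finset.sum_mul, hps, one_mul]
      _ ≤ _ := Finset.sum_le_sum fun i _ => mul_le_mul_of_nonneg_left (hci i).1 (hp0 i)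
  · calc _ ≤ ∑ i : Fin (2*T-1), p i * UE T (w+(r+1)) :=
        Finset.sum_le_sum fun i _ => mul_le_mul_of_nonneg_left (hci i).2 (hp0 i)
      _ = UE T (w+(r+1)) := by rw [← Finset.sum_mul, hps, one_mul]

lemma gv_bounds {T : ℕ} : ∀ (r : ℕ) (X Y : Finset (Fin (2*T-1))) (w : ℕ),
    X.card + r ≤ 2*T-1 → Y.card + r ≤ 2*T-1 →
    UE T w ≤ gv T r X Y w ∧ gv T r X Y w ≤ UE T (w + r) := by
  intro r
  induction r with
  | zero =>
    intro X Y w _ _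
    exact ⟨le_of_eq (gv_zero T X Y w).symm, le_of_eq (by rw [gv_zero, Nat.add_zero])⟩
  | succ r ih =>
    intro X Y w hX hY
    obtain ⟨i0, hi0⟩ : ∃ i0 : Fin (2*T-1), i0 ∉ X := by
      by_contra h; push_neg at h
      have hXu : X = Finset.univ := Finset.eq_univ_iff_forall.2 h
      have : X.card = 2*T-1 := by rw [hXu]; simp
      omega
    obtain ⟨j0, hj0⟩ : ∃ j0 : Fin (2*T-1), j0 ∉ Y := by
      by_contra h; push_neg at h
      have hYu : Y = Finset.univ := Finset.eq_univ_iff_forall.2 h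
      have : Y.card = 2*T-1 := by rw [hYu]; simp
      omega
    have hb := sum_bounds r ih X Y w hX hY
    have hBdd : BddAbove {v : ℝ | ∃ p : Fin (2*T-1) → ℝ,
        (∀ i, 0 ≤ p i) ∧ (∀ i ∈ X, p i = 0) ∧ (∑ i, p i) = 1 ∧
        v = sInf {u : ℝ | ∃ j, j ∉ Y ∧
          u = ∑ i, p i *
            (PP T i j * gv T r (insert i X) (insert j Y) (w + 1) +
             (1 - PP T i j) * gv T r (insert i X) (insert j Y) w)}} := by
      refine ⟨UE T (w + (r+1)), ?_⟩
      rintro v ⟨p, hp0, hpX, hps, rfl⟩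
      refine csInf_le_of_le ⟨UE T w, ?_⟩ ⟨j0, hj0, rfl⟩ (hb p hp0 hps j0).2
      rintro u ⟨j, hj, rfl⟩
      exact (hb p hp0 hps j).1
    set p0 : Fin (2*T-1) → ℝ := fun i => if i = i0 then 1 else 0 with hp0def
    have hp00 : ∀ i, 0 ≤ p0 i := by
      intro i; simp only [hp0def]; split <;> norm_num
    have hp0X : ∀ i ∈ X, p0 i = 0 := by
      intro i hi; simp only [hp0def]
      rw [if_neg]; rintro rfl; exact hi0 hi
    have hp0s : (∑ i, p0 i) = 1 := by
      simp only [hp0def]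
      rw [Finset.sum_ite_eq' Finset.univ i0 (fun _ => (1:ℝ))]
      simp
    have hmem : sInf {u : ℝ | ∃ j, j ∉ Y ∧
          u = ∑ i, p0 i *
            (PP T i j * gv T r (insert i X) (insert j Y) (w + 1) +
             (1 - PP T i j) * gv T r (insert i X) (insert j Y) w)} ∈
        {v : ℝ | ∃ p : Fin (2*T-1) → ℝ,
        (∀ i, 0 ≤ p i) ∧ (∀ i ∈ X, p i = 0) ∧ (∑ i, p i) = 1 ∧
        v = sInf {u : ℝ | ∃ j, j ∉ Y ∧
          u = ∑ i, p i *
            (PP T i j * gv T r (insert i X) (insert j Y) (w + 1) +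
             (1 - PP T i j) * gv T r (insert i X) (insert j Y) w)}} :=
      ⟨p0, hp00, hp0X, hp0s, rfl⟩
    constructor
    · show UE T w ≤ gval _ _ _ _ (r+1) X Y w
      rw [gval]
      refine le_trans ?_ (le_csSup hBdd hmem)
      refine le_csInf ⟨_, ⟨j0, hj0, rfl⟩⟩ ?_
      rintro u ⟨j, hj, rfl⟩
      exact (hb p0 hp00 hp0s j).1
    · show gval _ _ _ _ (r+1) X Y w ≤ UE T (w + (r+1))
      rw [gval]
      refine csSup_le ⟨_, hmem⟩ ?_
      rintro v ⟨p, hp0', hpX', hps', rfl⟩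
      refine csInf_le_of_le ⟨UE T w, ?_⟩ ⟨j0, hj0, rfl⟩ (hb p hp0' hps' j0).2
      rintro u ⟨j, hj, rfl⟩
      exact (hb p hp0' hps' j).1


/-- Injecting a concrete strategy `p` gives a lower bound on the value. -/
lemma step_ge {T : ℕ} (r : ℕ) (X Y : Finset (Fin (2*T-1))) (w : ℕ)
    (hX : X.card + (r+1) ≤ 2*T-1) (hY : Y.card + (r+1) ≤ 2*T-1)
    (b : ℝ) (p : Fin (2*T-1) → ℝ)
    (hp0 : ∀ i, 0 ≤ p i) (hpX : ∀ i ∈ X, p i = 0) (hps : (∑ i, p i) = 1)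
    (hb : ∀ j, j ∉ Y → b ≤ ∑ i, p i *
            (PP T i j * gv T r (insert i X) (insert j Y) (w + 1) +
             (1 - PP T i j) * gv T r (insert i X) (insert j Y) w)) :
    b ≤ gv T (r+1) X Y w := by
  obtain ⟨j0, hj0⟩ : ∃ j0 : Fin (2*T-1), j0 ∉ Y := by
    by_contra h; push_neg at h
    have hYu : Y = Finset.univ := Finset.eq_univ_iff_forall.2 h
    have : Y.card = 2*T-1 := by rw [hYu]; simp
    omega
  have hb' := sum_bounds r (fun X Y w hX hY => gv_bounds r X Y w hX hY) X Y w hX hY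
  show b ≤ gval _ _ _ _ (r+1) X Y w
  rw [gval]
  refine le_trans ?_ (le_csSup ?_ ⟨p, hp0, hpX, hps, rfl⟩)
  · refine le_csInf ⟨_, ⟨j0, hj0, rfl⟩⟩ ?_
    rintro u ⟨j, hj, rfl⟩
    exact hb j hj
  · refine ⟨UE T (w + (r+1)), ?_⟩
    rintro v ⟨q, hq0, hqX, hqs, rfl⟩
    refine csInf_le_of_le ⟨UE T w, ?_⟩ ⟨j0, hj0, rfl⟩ (hb' q hq0 hqs j0).2
    rintro u ⟨j, hj, rfl⟩
    exact (hb' q hq0 hqs j).1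

/-- convexity lower bound on one inner term. -/
lemma c_low {T : ℕ} (r : ℕ) (X Y : Finset (Fin (2*T-1))) (w : ℕ)
    (hX : X.card + (r+1) ≤ 2*T-1) (hY : Y.card + (r+1) ≤ 2*T-1)
    (i j : Fin (2*T-1)) :
    UE T w ≤ PP T i j * gv T r (insert i X) (insert j Y) (w + 1) +
        (1 - PP T i j) * gv T r (insert i X) (insert j Y) w := by
  have hcX : (insert i X).card + r ≤ 2*T-1 := by
    have := Finset.card_insert_le i X; omega
  have hcY : (insert j Y).card + r ≤ 2*T-1 := by
    have := Finset.card_insert_le j Y; omega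
  have l1 := (gv_bounds r (insert i X) (insert j Y) (w+1) hcX hcY).1
  have l0 := (gv_bounds r (insert i X) (insert j Y) w hcX hcY).1
  have q0 := PP_nonneg T i j
  have q1 := PP_le_one T i j
  have e1 : UE T (w+1) = UE T w + 1 := UE_succ T w
  nlinarith [mul_le_mul_of_nonneg_left (by linarith : UE T w ≤ gv T r (insert i X) (insert j Y) (w+1)) q0,
    mul_le_mul_of_nonneg_left l0 (by linarith : (0:ℝ) ≤ 1 - PP T i j)]

lemma card_lt {T : ℕ} (hT : 1 ≤ T) :
    (Finset.univ.filter fun i : Fin (2*T-1) => (i:ℕ) < T).card = T := by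
  have h : ∀ m ∈ Finset.range T, m < 2*T-1 := by
    intro m hm; rw [Finset.mem_range] at hm; omega
  have : (Finset.univ.filter fun i : Fin (2*T-1) => (i:ℕ) < T) =
      (Finset.range T).attachFin h := by
    ext i
    simp [Finset.mem_attachFin, Finset.mem_range]
  rw [this, Finset.card_attachFin, Finset.card_range]

lemma card_ge {T : ℕ} (hT : 1 ≤ T) :
    (Finset.univ.filter fun i : Fin (2*T-1) => T ≤ (i:ℕ)).card = T - 1 := by
  have h1 := Finset.card_filter_add_card_filter_not
    (s := (Finset.univ : Finset (Fin (2*T-1)))) (fun i : Fin (2*T-1) => (i:ℕ) < T)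
  have h2 : (Finset.univ.filter fun i : Fin (2*T-1) => ¬ (i:ℕ) < T) =
      (Finset.univ.filter fun i : Fin (2*T-1) => T ≤ (i:ℕ)) := by
    apply Finset.filter_congr; intro i _; simp [not_lt]
  have h3 : (Finset.univ : Finset (Fin (2*T-1))).card = 2*T-1 := by simp
  rw [card_lt hT, h2, h3] at h1
  omega

lemma sum_shift {T : ℕ} (p : Fin (2*T-1) → ℝ) (hps : (∑ i, p i) = 1)
    (a : Fin (2*T-1)) (A e : ℝ) :
    (∑ i, p i * (A + (if i = a then e else 0))) = A + p a * e := by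
  simp only [mul_add, Finset.sum_add_distrib, ← Finset.sum_mul, hps, one_mul,
    mul_ite, mul_zero]
  rw [Finset.sum_ite_eq' Finset.univ a (fun i => p i * e)]
  simp


lemma PP_eq_one {T : ℕ} {i j : Fin (2*T-1)} (h1 : (i:ℕ) = (j:ℕ)) (h2 : (i:ℕ) < T) :
    PP T i j = 1 := if_pos ⟨h1, h2⟩

lemma PP_eq_zero {T : ℕ} {i j : Fin (2*T-1)} (h : ¬((i:ℕ) = (j:ℕ) ∧ (i:ℕ) < T)) :
    PP T i j = 0 := if_neg h

lemma gv_main {T : ℕ} : ∀ r, 1 ≤ r → r ≤ T → ∀ (X Y : Finset (Fin (2*T-1))) (w : ℕ),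
    X.card = T - r → Y.card = T - r →
    (∀ i ∈ X, T ≤ (i:ℕ)) → (∀ j ∈ Y, T ≤ (j:ℕ)) →
    UE T w + 1/((T:ℝ)*(r:ℝ)) ≤ gv T r X Y w := by
  intro r hr
  induction r, hr using Nat.le_induction with
  | base =>
    intro hrT X Y w hXc hYc hXd hYd
    have hT : 1 ≤ T := hrT
    have hT0 : (0:ℝ) < (T:ℝ) := by exact_mod_cast (by omega : 0 < T)
    set p : Fin (2*T-1) → ℝ := fun i => if (i:ℕ) < T then 1/(T:ℝ) else 0 with hp
    have hp0 : ∀ i, 0 ≤ p i := by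
      intro i; simp only [hp]; split
      · positivity
      · exact le_rfl
    have hpX : ∀ i ∈ X, p i = 0 := by
      intro i hi; have := hXd i hi; simp only [hp]; rw [if_neg (by omega)]
    have hps : (∑ i, p i) = 1 := by
      simp only [hp]
      rw [Finset.sum_ite]
      simp only [Finset.sum_const, Finset.sum_const_zero, add_zero, nsmul_eq_mul]
      rw [card_lt hT]
      field_simp
      simp
    have hYeq : Y = Finset.univ.filter fun j : Fin (2*T-1) => T ≤ (j:ℕ) := by
      apply Finset.eq_of_subset_of_card_le
      · intro j hj; exact Finset.mem_filter.2 ⟨Finset.mem_univ _, hYd j hj⟩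
      · rw [card_ge hT, hYc]
    refine step_ge 0 X Y w (by omega) (by omega) _ p hp0 hpX hps ?_
    intro j hj
    rw [hYeq] at hj
    simp only [Finset.mem_filter, Finset.mem_univ, true_and, not_le] at hj
    simp only [gv_zero]
    have key : ∀ i ∈ Finset.univ, p i * (UE T w + (if i = j then (1:ℝ) else 0)) ≤
        p i * (PP T i j * UE T (w+1) + (1 - PP T i j) * UE T w) := by
      intro i _
      refine mul_le_mul_of_nonneg_left ?_ (hp0 i)
      by_cases hij : i = j
      · have hvv : (i:ℕ) = (j:ℕ) := by rw [hij]
        rw [PP_eq_one hvv (by omega), if_pos hij]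
        have := UE_succ T w
        linarith
      · have hvv : ¬((i:ℕ) = (j:ℕ) ∧ (i:ℕ) < T) := by
          rintro ⟨h1, -⟩; exact hij (Fin.val_injective h1)
        rw [PP_eq_zero hvv, if_neg hij]
        linarith
    calc UE T w + 1/((T:ℝ)*((1:ℕ):ℝ))
        = ∑ i, p i * (UE T w + (if i = j then (1:ℝ) else 0)) := by
          rw [sum_shift p hps j (UE T w) 1]
          have hpj : p j = 1/(T:ℝ) := by simp only [hp]; rw [if_pos hj]
          rw [hpj]; push_cast; ring
      _ ≤ _ := Finset.sum_le_sum key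
  | succ r hr ih =>
    intro hrT X Y w hXc hYc hXd hYd
    have hT : 1 ≤ T := by omega
    have hT0 : (0:ℝ) < (T:ℝ) := by exact_mod_cast (by omega : 0 < T)
    have hr0 : (1:ℝ) ≤ (r:ℝ) := by exact_mod_cast hr
    obtain ⟨i0, hi0d, hi0X⟩ : ∃ i0 : Fin (2*T-1), T ≤ (i0:ℕ) ∧ i0 ∉ X := by
      by_contra h; push_neg at h
      have hsub : (Finset.univ.filter fun i : Fin (2*T-1) => T ≤ (i:ℕ)) ⊆ X := by
        intro i hi
        exact h i (Finset.mem_filter.1 hi).2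
      have := Finset.card_le_card hsub
      rw [card_ge hT] at this
      omega
    set x : ℝ := 1/((T:ℝ)*((r:ℝ)+1)) with hxdef
    have hx0 : 0 ≤ x := by positivity
    have hTx : (T:ℝ)*x = 1/((r:ℝ)+1) := by
      rw [hxdef]; field_simp
    have h1Tx : 0 ≤ 1 - (T:ℝ)*x := by
      rw [hTx]
      have h1 : 1/((r:ℝ)+1) ≤ 1 := by
        rw [div_le_one (by linarith)]
        linarith
      linarith
    set p : Fin (2*T-1) → ℝ :=
      fun i => if (i:ℕ) < T then x else if i = i0 then 1 - (T:ℝ)*x else 0 with hp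
    have hp0 : ∀ i, 0 ≤ p i := by
      intro i; simp only [hp]
      split
      · exact hx0
      · split
        · exact h1Tx
        · exact le_rfl
    have hpX : ∀ i ∈ X, p i = 0 := by
      intro i hi
      have hTi := hXd i hi
      simp only [hp]
      rw [if_neg (by omega), if_neg (by rintro rfl; exact hi0X hi)]
    have hps : (∑ i, p i) = 1 := by
      simp only [hp]
      rw [Finset.sum_ite]
      rw [Finset.sum_ite_eq' _ i0 (fun _ => 1 - (T:ℝ)*x)]
      rw [if_pos (by simp only [Finset.mem_filter, Finset.mem_univ, true_and]; omega)]
      simp only [Finset.sum_const, nsmul_eq_mul]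
      rw [card_lt hT]
      ring
    refine step_ge r X Y w (by omega) (by omega) _ p hp0 hpX hps ?_
    intro j hj
    have hbx : UE T w + 1/((T:ℝ)*((r+1:ℕ):ℝ)) = UE T w + x := by
      rw [hxdef]; push_cast; ring_nf
    rw [hbx]
    by_cases hjT : (j:ℕ) < T
    · -- Team 2 plays a live ordinary player j
      have key : ∀ i ∈ Finset.univ, p i * (UE T w + (if i = j then (1:ℝ) else 0)) ≤
          p i * (PP T i j * gv T r (insert i X) (insert j Y) (w + 1) +
            (1 - PP T i j) * gv T r (insert i X) (insert j Y) w) := by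
        intro i _
        refine mul_le_mul_of_nonneg_left ?_ (hp0 i)
        have hcX : (insert i X).card + r ≤ 2*T-1 := by
          have := Finset.card_insert_le i X; omega
        have hcY : (insert j Y).card + r ≤ 2*T-1 := by
          have := Finset.card_insert_le j Y; omega
        by_cases hij : i = j
        · have hvv : (i:ℕ) = (j:ℕ) := by rw [hij]
          rw [PP_eq_one hvv (by omega), if_pos hij]
          have l1 := (gv_bounds r (insert i X) (insert j Y) (w+1) hcX hcY).1
          have := UE_succ T w
          linarith
        · rw [if_neg hij]
          have := c_low r X Y w (by omega) (by omega) i j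
          linarith
      calc UE T w + x = ∑ i, p i * (UE T w + (if i = j then (1:ℝ) else 0)) := by
            rw [sum_shift p hps j (UE T w) 1]
            have hpj : p j = x := by simp only [hp]; rw [if_pos hjT]
            rw [hpj]; ring
        _ ≤ _ := Finset.sum_le_sum key
    · -- Team 2 plays an invincible (or dead) player j, T ≤ j
      push_neg at hjT
      set y : ℝ := 1/((T:ℝ)*(r:ℝ)) with hydef
      have key : ∀ i ∈ Finset.univ, p i * (UE T w + (if i = i0 then y else 0)) ≤
          p i * (PP T i j * gv T r (insert i X) (insert j Y) (w + 1) +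
            (1 - PP T i j) * gv T r (insert i X) (insert j Y) w) := by
        intro i _
        refine mul_le_mul_of_nonneg_left ?_ (hp0 i)
        by_cases hii0 : i = i0
        · rw [if_pos hii0, hii0]
          rw [PP_eq_zero (by rintro ⟨h1, h2⟩; omega : ¬((i0:ℕ) = (j:ℕ) ∧ (i0:ℕ) < T))]
          have hXc' : (insert i0 X).card = T - r := by
            rw [Finset.card_insert_of_notMem hi0X]; omega
          have hYc' : (insert j Y).card = T - r := by
            rw [Finset.card_insert_of_notMem hj]; omega
          have hXd' : ∀ a ∈ insert i0 X, T ≤ (a:ℕ) := by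
            intro a ha; rcases Finset.mem_insert.1 ha with rfl | ha
            · exact hi0d
            · exact hXd a ha
          have hYd' : ∀ a ∈ insert j Y, T ≤ (a:ℕ) := by
            intro a ha; rcases Finset.mem_insert.1 ha with rfl | ha
            · exact hjT
            · exact hYd a ha
          have hih := ih (by omega) (insert i0 X) (insert j Y) w hXc' hYc' hXd' hYd'
          linarith
        · rw [if_neg hii0]
          have := c_low r X Y w (by omega) (by omega) i j
          linarith
      calc UE T w + x = ∑ i, p i * (UE T w + (if i = i0 then y else 0)) := by
            rw [sum_shift p hps i0 (UE T w) y]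
            have hpi0 : p i0 = 1 - (T:ℝ)*x := by
              simp only [hp]; rw [if_neg (by omega)]; simp
            rw [hpi0, hydef, hxdef]
            have hTne : (T:ℝ) ≠ 0 := ne_of_gt hT0
            have hrne : (r:ℝ) ≠ 0 := by linarith
            have hr1ne : (r:ℝ) + 1 ≠ 0 := by linarith
            field_simp
            ring
        _ ≤ _ := Finset.sum_le_sum key

end EDPH

/-- Let `T ≥ 1`, `m = n = 2T-1`, `U = U_E`, and let
`P i j = 1` iff `i = j ≤ T` (Team 1 has `T` ordinary players plus `T-1` dominated
ones; Team 2 has `T-1` extra invincible players).  Then the value is `> -T/2`: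
with `T-1` dominated players recruited, Team 1 wins a strictly positive expected
number of rounds. -/
theorem enough_dominated_players_help_UE (T : ℕ) (hT : 1 ≤ T) :
    gval (2 * T - 1) (2 * T - 1)
      (fun i j => if (i : ℕ) = (j : ℕ) ∧ (i : ℕ) < T then (1 : ℝ) else 0)
      (UE T) T ∅ ∅ 0 > -(T : ℝ) / 2 := by
  have h := EDPH.gv_main T hT le_rfl ∅ ∅ 0 (by simp) (by simp) (by simp) (by simp)
  have hT0 : (0:ℝ) < (T:ℝ) := by exact_mod_cast (by omega : 0 < T)
  have h2 : UE T 0 = -(T:ℝ)/2 := by simp [UE]; ring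
  have h3 : (0:ℝ) < 1/((T:ℝ)*(T:ℝ)) := by positivity
  have : -(T:ℝ)/2 < UE T 0 + 1/((T:ℝ)*(T:ℝ)) := by rw [h2]; linarith
  exact lt_of_lt_of_le this h
end

section
/- Let T ≥ 2, m = T + ⌊T/2⌋ − 1, n = T + ⌊T/2⌋, U = U_M, and let P be the m×n matrix with P i j = 1 if i = j ≤ T and P i j = 0 otherwise (Team 1 has T ordinary players, player i beating only opponent i, plus ⌊T/2⌋−1 dominated players with all-zero rows; Team 2 has ⌊T/2⌋ extra players who beat every opponent). Then V(G(T,P,U_M)) = −1; i.e., with only ⌊T/2⌋−1 dominated players, Team 2 can always win strictly more than half of the rounds. -/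
/-- The utility function `U_M(t)`: `1` if `t > T/2`, `0` if `t = T/2`, `-1` if `t < T/2`. -/
def UM (T : ℕ) : ℕ → ℝ := fun t => if T < 2 * t then 1 else if 2 * t = T then 0 else -1

section aux

/-- Per-round sum bound: a convex combination of values in `[-1,1]` is in `[-1,1]`. -/
lemma round_sum_bounds {m : ℕ} (p q a b : Fin m → ℝ)
    (hp : ∀ i, 0 ≤ p i) (hsum : (∑ i, p i) = 1)
    (hq0 : ∀ i, 0 ≤ q i) (hq1 : ∀ i, q i ≤ 1)
    (ha : ∀ i, -1 ≤ a i ∧ a i ≤ 1) (hb : ∀ i, -1 ≤ b i ∧ b i ≤ 1) :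
    -1 ≤ (∑ i, p i * (q i * a i + (1 - q i) * b i)) ∧
      (∑ i, p i * (q i * a i + (1 - q i) * b i)) ≤ 1 := by
  have hlo : ∀ i, p i * (-1) ≤ p i * (q i * a i + (1 - q i) * b i) := by
    intro i
    apply mul_le_mul_of_nonneg_left _ (hp i)
    nlinarith [mul_nonneg (hq0 i) (show (0:ℝ) ≤ a i + 1 by linarith [(ha i).1]),
      mul_nonneg (sub_nonneg.mpr (hq1 i)) (show (0:ℝ) ≤ b i + 1 by linarith [(hb i).1])]
  have hhi : ∀ i, p i * (q i * a i + (1 - q i) * b i) ≤ p i * 1 := by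
    intro i
    apply mul_le_mul_of_nonneg_left _ (hp i)
    nlinarith [mul_nonneg (hq0 i) (show (0:ℝ) ≤ 1 - a i by linarith [(ha i).2]),
      mul_nonneg (sub_nonneg.mpr (hq1 i)) (show (0:ℝ) ≤ 1 - b i by linarith [(hb i).2])]
  constructor
  · calc (-1 : ℝ) = ∑ i, p i * (-1) := by rw [← Finset.sum_mul, hsum]; ring
    _ ≤ _ := Finset.sum_le_sum fun i _ => hlo i
  · calc (∑ i, p i * (q i * a i + (1 - q i) * b i)) ≤ ∑ i, p i * 1 :=
        Finset.sum_le_sum fun i _ => hhi i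
    _ = 1 := by rw [← Finset.sum_mul, hsum]; ring

/-- The value function always lies in `[-1,1]` when the matrix entries lie in
`[0,1]` and the utility lies in `[-1,1]`. -/
lemma gval_bounds (m n : ℕ) (P : Fin m → Fin n → ℝ) (U : ℕ → ℝ)
    (hP0 : ∀ i j, 0 ≤ P i j) (hP1 : ∀ i j, P i j ≤ 1)
    (hU : ∀ w, -1 ≤ U w ∧ U w ≤ 1) :
    ∀ r X Y w, -1 ≤ gval m n P U r X Y w ∧ gval m n P U r X Y w ≤ 1 := by
  intro r
  induction r with
  | zero => intro X Y w; simpa only [gval] using hU w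
  | succ r ih =>
    intro X Y w
    rw [gval]
    set S := {v : ℝ | ∃ p : Fin m → ℝ,
        (∀ i, 0 ≤ p i) ∧ (∀ i ∈ X, p i = 0) ∧ (∑ i, p i) = 1 ∧
        v = sInf {u : ℝ | ∃ j, j ∉ Y ∧
          u = ∑ i, p i *
            (P i j * gval m n P U r (insert i X) (insert j Y) (w + 1) +
             (1 - P i j) * gval m n P U r (insert i X) (insert j Y) w)}} with hSdef
    have hmem : ∀ v ∈ S, -1 ≤ v ∧ v ≤ 1 := by
      rintro v ⟨p, hp0, hpX, hps, rfl⟩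
      set Ts := {u : ℝ | ∃ j, j ∉ Y ∧
          u = ∑ i, p i *
            (P i j * gval m n P U r (insert i X) (insert j Y) (w + 1) +
             (1 - P i j) * gval m n P U r (insert i X) (insert j Y) w)} with hTdef
      have hub : ∀ u ∈ Ts, -1 ≤ u ∧ u ≤ 1 := by
        rintro u ⟨j, hj, rfl⟩
        exact round_sum_bounds p (fun i => P i j)
          (fun i => gval m n P U r (insert i X) (insert j Y) (w + 1))
          (fun i => gval m n P U r (insert i X) (insert j Y) w)
          hp0 hps (fun i => hP0 i j) (fun i => hP1 i j)
          (fun i => ih (insert i X) (insert j Y) (w + 1))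
          (fun i => ih (insert i X) (insert j Y) w)
      by_cases hne : Ts.Nonempty
      · have hBB : BddBelow Ts := ⟨-1, fun u hu => (hub u hu).1⟩
        refine ⟨le_csInf hne fun u hu => (hub u hu).1, ?_⟩
        obtain ⟨u, hu⟩ := hne
        exact le_trans (csInf_le hBB hu) (hub u hu).2
      · rw [Set.not_nonempty_iff_eq_empty] at hne
        rw [hne, Real.sInf_empty]; norm_num
    by_cases hS : S.Nonempty
    · have hBA : BddAbove S := ⟨1, fun v hv => (hmem v hv).2⟩
      obtain ⟨v, hv⟩ := hS
      exact ⟨le_trans (hmem v hv).1 (le_csSup hBA hv),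
        csSup_le ⟨v, hv⟩ fun x hx => (hmem x hx).2⟩
    · rw [Set.not_nonempty_iff_eq_empty] at hS
      rw [hS, Real.sSup_empty]; norm_num

lemma card_filter_le_val (k t : ℕ) :
    (Finset.univ.filter fun i : Fin k => t ≤ (i : ℕ)).card = k - t := by
  by_cases h : t < k
  · have he : (Finset.univ.filter fun i : Fin k => t ≤ (i : ℕ)) =
        Finset.Ici (⟨t, h⟩ : Fin k) := by
      ext i; simp [Fin.le_def]
    rw [he, Fin.card_Ici]
  · have he : (Finset.univ.filter fun i : Fin k => t ≤ (i : ℕ)) = ∅ := by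
      ext i
      simp only [Finset.mem_filter, Finset.mem_univ, true_and, Finset.notMem_empty,
        iff_false, not_le]
      exact lt_of_lt_of_le i.isLt (not_lt.mp h)
    rw [he, Finset.card_empty]
    omega

lemma key_le (T : ℕ) (hT : 2 ≤ T) :
    ∀ r (X : Finset (Fin (T + T / 2 - 1))) (Y : Finset (Fin (T + T / 2))),
      X.card = Y.card → X.card + r = T →
      gval (T + T / 2 - 1) (T + T / 2)
        (fun i j => if (i : ℕ) = (j : ℕ) ∧ (i : ℕ) < T then (1 : ℝ) else 0)
        (UM T) r X Y 0 ≤ -1 := by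
  set m := T + T / 2 - 1 with hm
  set n := T + T / 2 with hn
  set P : Fin m → Fin n → ℝ :=
    fun i j => if (i : ℕ) = (j : ℕ) ∧ (i : ℕ) < T then (1 : ℝ) else 0 with hPdef
  have hP0 : ∀ i j, 0 ≤ P i j := by
    intro i j; simp only [hPdef]; split <;> norm_num
  have hP1 : ∀ i j, P i j ≤ 1 := by
    intro i j; simp only [hPdef]; split <;> norm_num
  have hU : ∀ w, -1 ≤ UM T w ∧ UM T w ≤ 1 := by
    intro w
    unfold UM
    split
    · norm_num
    · split <;> norm_num
  have hbnd := gval_bounds m n P (UM T) hP0 hP1 hU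
  have hmn : m < n := by omega
  have hTm : T ≤ m := by omega
  intro r
  induction r with
  | zero =>
    intro X Y _ _
    simp only [gval, UM]
    rw [if_neg (by omega), if_neg (by omega)]
  | succ r ih =>
    intro X Y hXY hcard
    -- find a "safe" column j : it is unused and loses to no available row
    have hsafe : ∃ j : Fin n, j ∉ Y ∧ ∀ i : Fin m, i ∉ X → P i j = 0 := by
      by_cases hA : ∃ j : Fin n, j ∉ Y ∧ (j : ℕ) < T ∧ ∃ i ∈ X, (i : ℕ) = (j : ℕ)
      · obtain ⟨j, hjY, hjT, i, hiX, hij⟩ := hA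
        refine ⟨j, hjY, fun i' hi' => ?_⟩
        simp only [hPdef]
        rw [if_neg]
        rintro ⟨h1, _⟩
        exact hi' (by rwa [show i' = i from Fin.ext (by omega)])
      · push_neg at hA
        -- every ordinary used row's matching column is used; count invincibles
        have hsubset : (Y.filter fun j : Fin n => T ≤ (j : ℕ)) ⊆
            (Finset.univ.filter fun j : Fin n => T ≤ (j : ℕ)) :=
          Finset.filter_subset_filter _ (Finset.subset_univ Y)
        have hcardlt : (Y.filter fun j : Fin n => T ≤ (j : ℕ)).card <
            (Finset.univ.filter fun j : Fin n => T ≤ (j : ℕ)).card := by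
          have hXsplit := Finset.card_filter_add_card_filter_not
            (s := X) (p := fun i : Fin m => T ≤ (i : ℕ))
          have hYsplit := Finset.card_filter_add_card_filter_not
            (s := Y) (p := fun j : Fin n => T ≤ (j : ℕ))
          have hXup : (X.filter fun i : Fin m => T ≤ (i : ℕ)).card ≤ m - T :=
            le_trans (Finset.card_le_card (Finset.filter_subset_filter _
              (Finset.subset_univ X))) (le_of_eq (card_filter_le_val m T))
          -- ordinary used rows inject into ordinary used columns
          have hinj : (X.filter fun i : Fin m => ¬ T ≤ (i : ℕ)).card ≤
              (Y.filter fun j : Fin n => ¬ T ≤ (j : ℕ)).card := by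
            apply Finset.card_le_card_of_injOn
              (fun i => (Fin.castLE (le_of_lt hmn) i))
            · intro i hi
              simp only [Finset.mem_coe, Finset.mem_filter, not_le] at hi ⊢
              have hiY : (Fin.castLE (le_of_lt hmn) i) ∈ Y := by
                by_contra hcon
                exact hA _ hcon (by simpa using hi.2) i hi.1 (by simp)
              exact ⟨hiY, by simpa using hi.2⟩
            · intro a _ b _ hab
              exact Fin.ext (by simpa [Fin.ext_iff] using hab)
          have hInv : (Finset.univ.filter fun j : Fin n => T ≤ (j : ℕ)).card = n - T :=
            card_filter_le_val n T
          omega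
        have hnotsub : ¬ ((Finset.univ.filter fun j : Fin n => T ≤ (j : ℕ)) ⊆
            (Y.filter fun j : Fin n => T ≤ (j : ℕ))) := fun h =>
          absurd (Finset.card_le_card h) (by omega)
        obtain ⟨j, hjmem, hjnot⟩ := Finset.not_subset.mp hnotsub
        simp only [Finset.mem_filter, Finset.mem_univ, true_and] at hjmem
        refine ⟨j, fun hjY => hjnot (Finset.mem_filter.mpr ⟨hjY, hjmem⟩), ?_⟩
        intro i _
        simp only [hPdef]
        rw [if_neg]
        rintro ⟨h1, h2⟩
        omega
    obtain ⟨j, hjY, hjP⟩ := hsafe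
    rw [gval]
    -- the set of achievable values is nonempty
    have hiex : ∃ i₀ : Fin m, i₀ ∉ X := by
      have hcc : 0 < Xᶜ.card := by
        rw [Finset.card_compl, Fintype.card_fin]
        omega
      obtain ⟨i₀, hi₀⟩ := Finset.card_pos.mp hcc
      exact ⟨i₀, Finset.mem_compl.mp hi₀⟩
    obtain ⟨i₀, hi₀⟩ := hiex
    apply csSup_le
    · refine ⟨_, ⟨fun i => if i = i₀ then (1 : ℝ) else 0, ?_, ?_, ?_, rfl⟩⟩
      · intro i; dsimp only; split <;> norm_num
      · intro i hiX
        dsimp only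
        rw [if_neg]
        rintro rfl; exact hi₀ hiX
      · simp
    · rintro v ⟨p, hp0, hpX, hps, rfl⟩
      have hmemu : (∑ i, p i *
            (P i j * gval m n P (UM T) r (insert i X) (insert j Y) (0 + 1) +
             (1 - P i j) * gval m n P (UM T) r (insert i X) (insert j Y) 0)) ∈
          {u : ℝ | ∃ j, j ∉ Y ∧
            u = ∑ i, p i *
              (P i j * gval m n P (UM T) r (insert i X) (insert j Y) (0 + 1) +
               (1 - P i j) * gval m n P (UM T) r (insert i X) (insert j Y) 0)} :=
        ⟨j, hjY, rfl⟩
      have hBB : BddBelow {u : ℝ | ∃ j, j ∉ Y ∧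
            u = ∑ i, p i *
              (P i j * gval m n P (UM T) r (insert i X) (insert j Y) (0 + 1) +
               (1 - P i j) * gval m n P (UM T) r (insert i X) (insert j Y) 0)} := by
        refine ⟨-1, ?_⟩
        rintro u ⟨j', hj', rfl⟩
        exact (round_sum_bounds p (fun i => P i j')
          (fun i => gval m n P (UM T) r (insert i X) (insert j' Y) (0 + 1))
          (fun i => gval m n P (UM T) r (insert i X) (insert j' Y) 0)
          hp0 hps (fun i => hP0 i j') (fun i => hP1 i j')
          (fun i => hbnd r _ _ _) (fun i => hbnd r _ _ _)).1
      refine le_trans (csInf_le hBB hmemu) ?_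
      have hterm : ∀ i : Fin m, p i *
            (P i j * gval m n P (UM T) r (insert i X) (insert j Y) (0 + 1) +
             (1 - P i j) * gval m n P (UM T) r (insert i X) (insert j Y) 0) ≤
            p i * (-1) := by
        intro i
        by_cases hiX : i ∈ X
        · rw [hpX i hiX]
          ring_nf
          exact le_refl _
        · rw [hjP i hiX]
          have hchild : gval m n P (UM T) r (insert i X) (insert j Y) 0 ≤ -1 := by
            apply ih
            · rw [Finset.card_insert_of_notMem hiX, Finset.card_insert_of_notMem hjY,
                hXY]
            · rw [Finset.card_insert_of_notMem hiX]; omega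
          have heq : (0 : ℝ) * gval m n P (UM T) r (insert i X) (insert j Y) (0 + 1) +
              (1 - 0) * gval m n P (UM T) r (insert i X) (insert j Y) 0 =
              gval m n P (UM T) r (insert i X) (insert j Y) 0 := by ring
          rw [heq]
          exact mul_le_mul_of_nonneg_left hchild (hp0 i)
      calc (∑ i, p i *
            (P i j * gval m n P (UM T) r (insert i X) (insert j Y) (0 + 1) +
             (1 - P i j) * gval m n P (UM T) r (insert i X) (insert j Y) 0)) ≤
          ∑ i, p i * (-1) := Finset.sum_le_sum fun i _ => hterm i
        _ = -1 := by rw [← Finset.sum_mul, hps]; ring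

end aux

/-- Let `T ≥ 2`, `m = T + ⌊T/2⌋ - 1`, `n = T + ⌊T/2⌋`, `U = U_M`,
and let `P i j = 1` iff `i = j ≤ T` (Team 1 has `T` ordinary players plus
`⌊T/2⌋ - 1` dominated ones; Team 2 has `⌊T/2⌋` extra invincible players).  Then the
value is `-1`: Team 2 can always win strictly more than half of the rounds. -/
theorem few_dominated_players_lose_UM (T : ℕ) (hT : 2 ≤ T) :
    gval (T + T / 2 - 1) (T + T / 2)
      (fun i j => if (i : ℕ) = (j : ℕ) ∧ (i : ℕ) < T then (1 : ℝ) else 0)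
      (UM T) T ∅ ∅ 0 = -1 := by
  refine le_antisymm (key_le T hT T ∅ ∅ rfl (by simp)) ?_
  refine (gval_bounds _ _ _ _ ?_ ?_ ?_ T ∅ ∅ 0).1
  · intro i j; split <;> norm_num
  · intro i j; split <;> norm_num
  · intro w
    unfold UM
    split
    · norm_num
    · split <;> norm_num
end
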